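/- arXiv:1810.12486 — 5 statements merged into one kernel-verified Lean document; each statement's English description precedes it below -/
import Mathlib

section
/- Let q > 0 and let M be the Neumann–Poincaré operator of the crescent domain realized in frequency variables on H. Then the spectrum of M (as a bounded ℂ-linear operator on H) equals the real interval [-1/2, 1/2] ⊂ ℂ, and M has no eigenvalues: for every λ ∈ ℂ and f ∈ H, if M f = λ f then f = 0. -/
open MeasureTheory Set

set_option synthInstance.maxHeartbeats 1000000
set_option maxHeartbeats 2000000

noncomputable section

/-- `w₁(k) = (1 - e^{-q|k|})/(2|k|)`. -/
def w1 (q k : ℝ) : ℝ := (1 - Real.exp (-(q * |k|))) / (2 * |k|)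

/-- `w₂(k) = (1 + e^{-q|k|})/(2|k|)`. -/
def w2 (q k : ℝ) : ℝ := (1 + Real.exp (-(q * |k|))) / (2 * |k|)

/-- The measure `μ₁` with density `w₁` w.r.t. Lebesgue measure. -/
def mu1 (q : ℝ) : Measure ℝ := volume.withDensity fun k => ENNReal.ofReal (w1 q k)

/-- The measure `μ₂` with density `w₂` w.r.t. Lebesgue measure. -/
def mu2 (q : ℝ) : Measure ℝ := volume.withDensity fun k => ENNReal.ofReal (w2 q k)

/-- First multiplier of the NP operator of the crescent domain: `-(1/2)e^{-q|k|}`. -/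
def m1 (q k : ℝ) : ℝ := -(1/2) * Real.exp (-(q * |k|))

/-- Second multiplier of the NP operator of the crescent domain: `(1/2)e^{-q|k|}`. -/
def m2 (q k : ℝ) : ℝ := (1/2) * Real.exp (-(q * |k|))

/-- The Hilbert space `H = L²(μ₁;ℂ) × L²(μ₂;ℂ)` with the `L²` product inner product. -/
abbrev Hsp (q : ℝ) := WithLp 2 (Lp ℂ 2 (mu1 q) × Lp ℂ 2 (mu2 q))

namespace NPaux

open Filter
open scoped NNReal ENNReal

variable {μ : Measure ℝ}

theorem memMul {g : ℝ → ℂ} (hg : Measurable g) (C : ℝ≥0) (hb : ∀ k, ‖g k‖ ≤ C)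
    (f : Lp ℂ 2 μ) : MemLp (fun k => g k * f k) 2 μ :=
  (Lp.memLp f).of_le_mul (hg.aestronglyMeasurable.mul (Lp.aestronglyMeasurable f))
    (Eventually.of_forall fun k => by
      rw [norm_mul]; exact mul_le_mul_of_nonneg_right (hb k) (norm_nonneg _))

/-- Multiplication operator on `L²` by a bounded measurable function. -/
def mulOp (μ : Measure ℝ) (g : ℝ → ℂ) (hg : Measurable g) (C : ℝ≥0) (hb : ∀ k, ‖g k‖ ≤ C) :
    Lp ℂ 2 μ →L[ℂ] Lp ℂ 2 μ :=
  LinearMap.mkContinuous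
    { toFun := fun f => (memMul hg C hb f).toLp _
      map_add' := fun f f' => by
        rw [← MemLp.toLp_add]
        refine MemLp.toLp_congr _ _ ?_
        filter_upwards [Lp.coeFn_add f f'] with k hk
        rw [hk]; dsimp; ring
      map_smul' := fun c f => by
        simp only [RingHom.id_apply]
        rw [← MemLp.toLp_const_smul c (memMul hg C hb f)]
        refine MemLp.toLp_congr _ _ ?_
        filter_upwards [Lp.coeFn_smul c f] with k hk
        rw [hk]; dsimp; ring }
    C
    (fun f => by
      simp only [LinearMap.coe_mk, AddHom.coe_mk]
      rw [Lp.norm_toLp, Lp.norm_def]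
      have h := eLpNorm_le_nnreal_smul_eLpNorm_of_ae_le_mul (μ := μ) (c := C)
        (f := fun k => g k * f k) (g := (f : ℝ → ℂ))
        (Eventually.of_forall fun k => by
          simp only [nnnorm_mul]
          exact mul_le_mul_of_nonneg_right (by exact_mod_cast hb k) zero_le') 2
      have hfin : eLpNorm (f : ℝ → ℂ) 2 μ ≠ ∞ := Lp.eLpNorm_ne_top f
      calc (eLpNorm (fun k => g k * f k) 2 μ).toReal
          ≤ ((C : ℝ≥0∞) * eLpNorm (f : ℝ → ℂ) 2 μ).toReal := by
            refine ENNReal.toReal_mono ?_ (by simpa [ENNReal.smul_def] using h)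
            exact ENNReal.mul_ne_top ENNReal.coe_ne_top hfin
        _ = C * (eLpNorm (f : ℝ → ℂ) 2 μ).toReal := by
            rw [ENNReal.toReal_mul, ENNReal.coe_toReal])

theorem mulOp_coeFn (g : ℝ → ℂ) (hg : Measurable g) (C : ℝ≥0) (hb : ∀ k, ‖g k‖ ≤ C)
    (f : Lp ℂ 2 μ) : ⇑(mulOp μ g hg C hb f) =ᵐ[μ] fun k => g k * f k :=
  MemLp.coeFn_toLp (memMul hg C hb f)

theorem withDensity_Icc_pos_fin (w : ℝ → ℝ) {a b c C : ℝ} (hab : a < b) (hc : 0 < c)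
    (hl : ∀ k ∈ Icc a b, c ≤ w k) (hu : ∀ k ∈ Icc a b, w k ≤ C) :
    0 < (volume.withDensity fun k => ENNReal.ofReal (w k)) (Icc a b) ∧
      (volume.withDensity fun k => ENNReal.ofReal (w k)) (Icc a b) ≠ ∞ := by
  rw [withDensity_apply _ measurableSet_Icc]
  constructor
  · calc (0:ℝ≥0∞) < ENNReal.ofReal c * volume (Icc a b) := by
          refine ENNReal.mul_pos (ENNReal.ofReal_pos.2 hc).ne' ?_
          simp only [Real.volume_Icc]
          exact (ENNReal.ofReal_pos.2 (by linarith)).ne'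
      _ = ∫⁻ _ in Icc a b, ENNReal.ofReal c := (setLIntegral_const _ _).symm
      _ ≤ ∫⁻ k in Icc a b, ENNReal.ofReal (w k) :=
          setLIntegral_mono' measurableSet_Icc fun k hk => ENNReal.ofReal_le_ofReal (hl k hk)
  · refine ne_top_of_le_ne_top (ENNReal.mul_ne_top ENNReal.ofReal_ne_top
      (by simp [Real.volume_Icc]) : ENNReal.ofReal C * volume (Icc a b) ≠ ∞) ?_
    calc ∫⁻ k in Icc a b, ENNReal.ofReal (w k)
        ≤ ∫⁻ _ in Icc a b, ENNReal.ofReal C :=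
          setLIntegral_mono' measurableSet_Icc fun k hk => ENNReal.ofReal_le_ofReal (hu k hk)
      _ = ENNReal.ofReal C * volume (Icc a b) := setLIntegral_const _ _

theorem volume_level_zero {q : ℝ} (hq : 0 < q) {c : ℝ} (hc : c ≠ 0) (t : ℂ) :
    volume {k : ℝ | ((c * Real.exp (-(q * |k|)) : ℝ) : ℂ) = t} = 0 := by
  rcases Set.eq_empty_or_nonempty {k : ℝ | ((c * Real.exp (-(q * |k|)) : ℝ) : ℂ) = t} with h | ⟨k₀, hk₀⟩
  · rw [h]; exact measure_empty
  · refine measure_mono_null (fun k hk => ?_)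
      (((Set.finite_singleton (-k₀)).insert k₀).countable.measure_zero _)
    have h1 : c * Real.exp (-(q * |k|)) = c * Real.exp (-(q * |k₀|)) := by
      have h2 : ((c * Real.exp (-(q * |k|)) : ℝ) : ℂ) = ((c * Real.exp (-(q * |k₀|)) : ℝ) : ℂ) :=
        hk.trans hk₀.symm
      exact_mod_cast h2
    have h3 := Real.exp_injective (mul_left_cancel₀ hc h1)
    have h4 : |k| = |k₀| := mul_left_cancel₀ hq.ne' (neg_injective h3)
    rcases abs_eq_abs.1 h4 with h | h
    · exact Set.mem_insert_iff.2 (Or.inl h)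
    · exact Set.mem_insert_iff.2 (Or.inr (by simp [h]))

theorem exists_interval (q : ℝ) (hq : 0 < q) {ε : ℝ} (hε : 0 < ε) {s : ℝ}
    (hs0 : 0 ≤ s) (hs2 : s ≤ 1/2) :
    ∃ a b : ℝ, 0 < a ∧ a < b ∧ ∀ k ∈ Icc a b, |1/2 * Real.exp (-(q * k)) - s| ≤ ε := by
  rcases eq_or_lt_of_le hs0 with h0 | hpos
  · refine ⟨max 1 (-(Real.log (2*ε))/q), max 1 (-(Real.log (2*ε))/q) + 1,
      lt_of_lt_of_le one_pos (le_max_left _ _), lt_add_one _, ?_⟩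
    intro k hk
    have hk1 : -(Real.log (2*ε))/q ≤ k := le_trans (le_max_right _ _) hk.1
    have hlog : -(q*k) ≤ Real.log (2*ε) := by
      rw [div_le_iff₀ hq] at hk1; nlinarith
    have hexp : Real.exp (-(q*k)) ≤ 2*ε :=
      (Real.exp_le_exp.2 hlog).trans_eq (Real.exp_log (by positivity))
    rw [← h0, sub_zero, abs_of_nonneg (by positivity)]
    linarith
  · set k₀ := -(Real.log (2*s))/q with hk₀def
    have hk₀ : 0 ≤ k₀ := by
      apply div_nonneg _ hq.le
      simp only [neg_nonneg]
      exact Real.log_nonpos (by linarith) (by linarith)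
    have hek₀ : Real.exp (-(q*k₀)) = 2*s := by
      have h : -(q*k₀) = Real.log (2*s) := by
        rw [hk₀def]; field_simp
      rw [h, Real.exp_log (by linarith)]
    set δ := 2*ε/q with hδ
    have hδpos : 0 < δ := by positivity
    refine ⟨k₀ + δ/2, k₀ + δ, by positivity, by linarith, ?_⟩
    intro k hk
    have hk1 : k₀ ≤ k := by have := hk.1; linarith
    have hk2 : k ≤ k₀ + δ := hk.2
    have he1 : Real.exp (-(q*k)) ≤ 2*s := by
      rw [← hek₀]; exact Real.exp_le_exp.2 (by nlinarith)
    have hsplit : Real.exp (-(q*k)) = Real.exp (-(q*k₀)) * Real.exp (-(q*(k-k₀))) := by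
      rw [← Real.exp_add]; ring_nf
    have hexp1 : Real.exp (-(q*k₀)) ≤ 1 := Real.exp_le_one_iff.2 (by nlinarith)
    have hexp2 : Real.exp (-(q*(k-k₀))) ≤ 1 := Real.exp_le_one_iff.2 (by nlinarith)
    have h1e : 1 - Real.exp (-(q*(k-k₀))) ≤ q*(k-k₀) := by
      have := Real.add_one_le_exp (-(q*(k-k₀))); linarith
    have he2 : Real.exp (-(q*k₀)) - Real.exp (-(q*k)) ≤ q*δ := by
      rw [hsplit]
      calc Real.exp (-(q*k₀)) - Real.exp (-(q*k₀)) * Real.exp (-(q*(k-k₀)))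
          = Real.exp (-(q*k₀)) * (1 - Real.exp (-(q*(k-k₀)))) := by ring
        _ ≤ 1 * (q*(k-k₀)) :=
            mul_le_mul hexp1 h1e (by linarith) zero_le_one
        _ ≤ q*δ := by nlinarith
    have hqδ : q * δ = 2*ε := by rw [hδ]; field_simp
    rw [abs_of_nonpos (by nlinarith)]
    nlinarith

/-- Pair multiplication operator on `Hsp q`. -/
def pairOp (q : ℝ) (g1 g2 : ℝ → ℂ) (h1 : Measurable g1) (h2 : Measurable g2)
    (C : ℝ≥0) (hb1 : ∀ k, ‖g1 k‖ ≤ C) (hb2 : ∀ k, ‖g2 k‖ ≤ C) : Hsp q →L[ℂ] Hsp q :=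
  (WithLp.prodContinuousLinearEquiv 2 ℂ _ _).symm.toContinuousLinearMap ∘L
    (((mulOp (mu1 q) g1 h1 C hb1).prodMap (mulOp (mu2 q) g2 h2 C hb2)) ∘L
      (WithLp.prodContinuousLinearEquiv 2 ℂ _ _).toContinuousLinearMap)

theorem pairOp_fst {q : ℝ} {g1 g2 : ℝ → ℂ} {h1 : Measurable g1} {h2 : Measurable g2}
    {C : ℝ≥0} {hb1 : ∀ k, ‖g1 k‖ ≤ C} {hb2 : ∀ k, ‖g2 k‖ ≤ C} (f : Hsp q) :
    (WithLp.equiv 2 _ (pairOp q g1 g2 h1 h2 C hb1 hb2 f)).1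
      = mulOp (mu1 q) g1 h1 C hb1 (WithLp.equiv 2 _ f).1 := rfl

theorem pairOp_snd {q : ℝ} {g1 g2 : ℝ → ℂ} {h1 : Measurable g1} {h2 : Measurable g2}
    {C : ℝ≥0} {hb1 : ∀ k, ‖g1 k‖ ≤ C} {hb2 : ∀ k, ‖g2 k‖ ≤ C} (f : Hsp q) :
    (WithLp.equiv 2 _ (pairOp q g1 g2 h1 h2 C hb1 hb2 f)).2
      = mulOp (mu2 q) g2 h2 C hb2 (WithLp.equiv 2 _ f).2 := rfl

theorem Hsp_ext {q : ℝ} {x y : Hsp q}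
    (h1 : (WithLp.equiv 2 _ x).1 = (WithLp.equiv 2 _ y).1)
    (h2 : (WithLp.equiv 2 _ x).2 = (WithLp.equiv 2 _ y).2) : x = y :=
  (WithLp.equiv 2 _).injective (Prod.ext h1 h2)

theorem equiv_aMap_sub_fst (q : ℝ) (lam : ℂ) (T : Hsp q →L[ℂ] Hsp q) (x : Hsp q) :
    (WithLp.equiv 2 _ ((algebraMap ℂ (Hsp q →L[ℂ] Hsp q) lam - T) x)).1
      = lam • (WithLp.equiv 2 _ x).1 - (WithLp.equiv 2 _ (T x)).1 := by
  simp [Algebra.algebraMap_eq_smul_one, ContinuousLinearMap.sub_apply,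
    ContinuousLinearMap.smul_apply, ContinuousLinearMap.one_apply,
    WithLp.ofLp_sub, WithLp.ofLp_smul]

theorem equiv_aMap_sub_snd (q : ℝ) (lam : ℂ) (T : Hsp q →L[ℂ] Hsp q) (x : Hsp q) :
    (WithLp.equiv 2 _ ((algebraMap ℂ (Hsp q →L[ℂ] Hsp q) lam - T) x)).2
      = lam • (WithLp.equiv 2 _ x).2 - (WithLp.equiv 2 _ (T x)).2 := by
  simp [Algebra.algebraMap_eq_smul_one, ContinuousLinearMap.sub_apply,
    ContinuousLinearMap.smul_apply, ContinuousLinearMap.one_apply,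
    WithLp.ofLp_sub, WithLp.ofLp_smul]

theorem norm_pair_fst {α β : Type*} [NormedAddCommGroup α] [NormedAddCommGroup β]
    (a : α) : ‖(WithLp.equiv 2 (α × β)).symm (a, (0:β))‖ = ‖a‖ := by
  rw [WithLp.prod_norm_eq_add (by norm_num)]
  have h1 : ((WithLp.equiv 2 (α × β)).symm (a, (0:β))).fst = a := rfl
  have h2 : ((WithLp.equiv 2 (α × β)).symm (a, (0:β))).snd = (0:β) := rfl
  rw [h1, h2]
  have h3 : ((2:ℝ≥0∞)).toReal = (2:ℝ) := by norm_num
  rw [h3, norm_zero, Real.zero_rpow (by norm_num), add_zero, ← Real.rpow_mul (norm_nonneg a)]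
  norm_num

theorem norm_pair_snd {α β : Type*} [NormedAddCommGroup α] [NormedAddCommGroup β]
    (b : β) : ‖(WithLp.equiv 2 (α × β)).symm ((0:α), b)‖ = ‖b‖ := by
  rw [WithLp.prod_norm_eq_add (by norm_num)]
  have h1 : ((WithLp.equiv 2 (α × β)).symm ((0:α), b)).fst = (0:α) := rfl
  have h2 : ((WithLp.equiv 2 (α × β)).symm ((0:α), b)).snd = b := rfl
  rw [h1, h2]
  have h3 : ((2:ℝ≥0∞)).toReal = (2:ℝ) := by norm_num
  rw [h3, norm_zero, Real.zero_rpow (by norm_num), zero_add, ← Real.rpow_mul (norm_nonneg b)]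
  norm_num

end NPaux

namespace NPaux

open Filter
open scoped NNReal ENNReal

theorem mc1_meas (q : ℝ) : Measurable fun k : ℝ => ((m1 q k : ℝ) : ℂ) := by
  unfold m1; fun_prop

theorem mc2_meas (q : ℝ) : Measurable fun k : ℝ => ((m2 q k : ℝ) : ℂ) := by
  unfold m2; fun_prop

theorem exp_le_one' (q : ℝ) (hq : 0 < q) (k : ℝ) : Real.exp (-(q * |k|)) ≤ 1 :=
  Real.exp_le_one_iff.2 (neg_nonpos.2 (mul_nonneg hq.le (abs_nonneg k)))

theorem m1_mem (q : ℝ) (hq : 0 < q) (k : ℝ) : m1 q k ∈ Icc (-(1/2):ℝ) (1/2) := by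
  have h1 := exp_le_one' q hq k
  have h2 := Real.exp_pos (-(q * |k|))
  unfold m1; constructor <;> nlinarith

theorem m2_mem (q : ℝ) (hq : 0 < q) (k : ℝ) : m2 q k ∈ Icc (-(1/2):ℝ) (1/2) := by
  have h1 := exp_le_one' q hq k
  have h2 := Real.exp_pos (-(q * |k|))
  unfold m2; constructor <;> nlinarith

theorem mc1_bound (q : ℝ) (hq : 0 < q) : ∀ k, ‖((m1 q k : ℝ) : ℂ)‖ ≤ ((1/2 : ℝ≥0) : ℝ) := fun k => by
  have h := m1_mem q hq k
  rw [Complex.norm_real, Real.norm_eq_abs, abs_le]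
  have hh : ((1/2:ℝ≥0):ℝ) = 1/2 := by norm_num
  rw [hh]
  exact ⟨h.1, h.2⟩

theorem mc2_bound (q : ℝ) (hq : 0 < q) : ∀ k, ‖((m2 q k : ℝ) : ℂ)‖ ≤ ((1/2 : ℝ≥0) : ℝ) := fun k => by
  have h := m2_mem q hq k
  rw [Complex.norm_real, Real.norm_eq_abs, abs_le]
  have hh : ((1/2:ℝ≥0):ℝ) = 1/2 := by norm_num
  rw [hh]
  exact ⟨h.1, h.2⟩

theorem w2_bounds (q : ℝ) (hq : 0 < q) {a b k : ℝ} (ha : 0 < a) (hk : k ∈ Icc a b) :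
    1/(2*b) ≤ w2 q k ∧ w2 q k ≤ 1/a := by
  have hk0 : 0 < k := lt_of_lt_of_le ha hk.1
  have hb : 0 < b := lt_of_lt_of_le hk0 hk.2
  have habs : |k| = k := abs_of_pos hk0
  have hepos := Real.exp_pos (-(q*|k|))
  have hele := exp_le_one' q hq k
  rw [w2, habs]
  rw [habs] at hepos hele
  constructor
  · rw [div_le_div_iff₀ (by positivity) (by positivity)]
    nlinarith [hk.2]
  · rw [div_le_div_iff₀ (by positivity) ha]
    nlinarith [hk.1]

theorem w1_bounds (q : ℝ) (hq : 0 < q) {a b k : ℝ} (ha : 0 < a) (hk : k ∈ Icc a b) :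
    (1 - Real.exp (-(q*a)))/(2*b) ≤ w1 q k ∧ w1 q k ≤ 1/a := by
  have hk0 : 0 < k := lt_of_lt_of_le ha hk.1
  have hb : 0 < b := lt_of_lt_of_le hk0 hk.2
  have habs : |k| = k := abs_of_pos hk0
  have hepos := Real.exp_pos (-(q*|k|))
  have hele := exp_le_one' q hq k
  have hea : Real.exp (-(q*k)) ≤ Real.exp (-(q*a)) :=
    Real.exp_le_exp.2 (by nlinarith [hk.1])
  have heal : Real.exp (-(q*a)) < 1 := Real.exp_lt_one_iff.2 (by nlinarith)
  rw [w1, habs]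
  rw [habs] at hepos hele
  constructor
  · rw [div_le_div_iff₀ (by positivity) (by positivity)]
    nlinarith [hk.2]
  · rw [div_le_div_iff₀ (by positivity) ha]
    nlinarith [hk.1]

theorem eig_comp {μ : Measure ℝ} {g : ℝ → ℂ} (hg : Measurable g) (C : ℝ≥0)
    (hb : ∀ k, ‖g k‖ ≤ C) (lam : ℂ) (hZ : μ {k | g k = lam} = 0)
    (x : Lp ℂ 2 μ) (hx : mulOp μ g hg C hb x = lam • x) : x = 0 := by
  have hne : ∀ᵐ k ∂μ, g k ≠ lam := by
    rw [ae_iff]; simpa only [not_not] using hZ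
  refine Lp.ext ?_
  have h1 : ⇑(mulOp μ g hg C hb x) =ᵐ[μ] ⇑(lam • x) := by rw [hx]
  filter_upwards [h1, mulOp_coeFn g hg C hb x, Lp.coeFn_smul lam x, hne,
    Lp.coeFn_zero (E := ℂ) (p := 2) (μ := μ)] with k e1 e2 e3 e4 e5
  have h2 : g k * x k = lam * x k := by
    rw [← e2, e1, e3]; rfl
  have h3 : (g k - lam) * x k = 0 := by ring_nf; linear_combination h2
  rw [e5]
  rcases mul_eq_zero.1 h3 with h | h
  · exact absurd (sub_eq_zero.1 h) e4
  · exact h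

theorem indicator_comp_bound {μ : Measure ℝ} (m : ℝ → ℂ) (hm : Measurable m) (C : ℝ≥0)
    (hbm : ∀ k, ‖m k‖ ≤ C) (lam : ℂ) {S : Set ℝ} (hS : MeasurableSet S) (hμS : μ S ≠ ∞)
    {ε : ℝ} (hε : 0 ≤ ε) (hb : ∀ k ∈ S, ‖lam - m k‖ ≤ ε) :
    ‖lam • (indicatorConstLp 2 hS hμS (1:ℂ)) - mulOp μ m hm C hbm (indicatorConstLp 2 hS hμS (1:ℂ))‖
      ≤ ε * ‖(indicatorConstLp 2 hS hμS (1:ℂ))‖ := by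
  set u : Lp ℂ 2 μ := indicatorConstLp 2 hS hμS (1:ℂ) with hu
  have hae : ∀ᵐ k ∂μ,
      ‖(lam • u - mulOp μ m hm C hbm u : Lp ℂ 2 μ) k‖₊ ≤ ε.toNNReal * ‖(u : ℝ → ℂ) k‖₊ := by
    filter_upwards [Lp.coeFn_sub (lam • u) (mulOp μ m hm C hbm u), Lp.coeFn_smul lam u,
      mulOp_coeFn m hm C hbm u,
      indicatorConstLp_coeFn (p := 2) (hs := hS) (hμs := hμS) (c := (1:ℂ))] with k e1 e2 e3 e4
    rw [e1, Pi.sub_apply, e2, Pi.smul_apply, e3, smul_eq_mul, ← sub_mul, nnnorm_mul]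
    by_cases hk : k ∈ S
    · refine mul_le_mul_of_nonneg_right ?_ zero_le'
      rw [← NNReal.coe_le_coe, coe_nnnorm, Real.coe_toNNReal _ hε]
      exact hb k hk
    · have h0 : (u : ℝ → ℂ) k = 0 := by rw [e4, Set.indicator_of_notMem hk]
      rw [h0]; simp
  have h2 := eLpNorm_le_nnreal_smul_eLpNorm_of_ae_le_mul hae 2
  rw [Lp.norm_def, Lp.norm_def]
  have hfin : eLpNorm (⇑u) 2 μ ≠ ∞ := Lp.eLpNorm_ne_top u
  calc (eLpNorm (⇑(lam • u - mulOp μ m hm C hbm u)) 2 μ).toReal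
      ≤ ((ε.toNNReal : ℝ≥0∞) * eLpNorm (⇑u) 2 μ).toReal :=
        ENNReal.toReal_mono (ENNReal.mul_ne_top ENNReal.coe_ne_top hfin)
          (by simpa [ENNReal.smul_def] using h2)
    _ = ε * (eLpNorm (⇑u) 2 μ).toReal := by
        rw [ENNReal.toReal_mul, ENNReal.coe_toReal, Real.coe_toNNReal _ hε]

end NPaux

open NPaux Filter
open scoped NNReal ENNReal

/-- The Neumann–Poincaré operator of the crescent domain, realized in
frequency variables as the multiplication operator
`M(f₁,f₂) = (-(1/2)e^{-q|k|} f₁, (1/2)e^{-q|k|} f₂)` on `H`, has spectrum equal to the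
real interval `[-1/2, 1/2] ⊂ ℂ` and has no eigenvalues. -/
theorem neumannPoincare_crescent_spectrum_no_eigenvalues (q : ℝ) (hq : 0 < q) :
    ∃ M : Hsp q →L[ℂ] Hsp q,
      (∀ f : Hsp q,
        ((WithLp.equiv 2 _ (M f)).1 : ℝ → ℂ) =ᵐ[mu1 q]
          (fun k => (m1 q k : ℂ) * (WithLp.equiv 2 _ f).1 k) ∧
        ((WithLp.equiv 2 _ (M f)).2 : ℝ → ℂ) =ᵐ[mu2 q]
          (fun k => (m2 q k : ℂ) * (WithLp.equiv 2 _ f).2 k)) ∧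
      spectrum ℂ M = Complex.ofReal '' Icc (-(1/2) : ℝ) (1/2) ∧
      ∀ (lam : ℂ) (f : Hsp q), M f = lam • f → f = 0 := by
  classical
  set Sset : Set ℂ := Complex.ofReal '' Icc (-(1/2) : ℝ) (1/2) with hSset
  set T1 := mulOp (mu1 q) (fun k => ((m1 q k : ℝ) : ℂ)) (mc1_meas q) (1/2) (mc1_bound q hq)
    with hT1
  set T2 := mulOp (mu2 q) (fun k => ((m2 q k : ℝ) : ℂ)) (mc2_meas q) (1/2) (mc2_bound q hq)
    with hT2
  set M : Hsp q →L[ℂ] Hsp q :=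
    pairOp q (fun k => ((m1 q k : ℝ) : ℂ)) (fun k => ((m2 q k : ℝ) : ℂ))
      (mc1_meas q) (mc2_meas q) (1/2) (mc1_bound q hq) (mc2_bound q hq) with hMdef
  have hMfst : ∀ f : Hsp q, (WithLp.equiv 2 _ (M f)).1 = T1 (WithLp.equiv 2 _ f).1 :=
    fun f => rfl
  have hMsnd : ∀ f : Hsp q, (WithLp.equiv 2 _ (M f)).2 = T2 (WithLp.equiv 2 _ f).2 :=
    fun f => rfl
  -- no eigenvalues
  have hno : ∀ (lam : ℂ) (f : Hsp q), M f = lam • f → f = 0 := by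
    intro lam f hf
    have h1 : T1 (WithLp.equiv 2 _ f).1 = lam • (WithLp.equiv 2 _ f).1 := by
      have h := congrArg (fun x : Hsp q => (WithLp.equiv 2 _ x).1) hf
      rw [← hMfst]; simpa using h
    have h2 : T2 (WithLp.equiv 2 _ f).2 = lam • (WithLp.equiv 2 _ f).2 := by
      have h := congrArg (fun x : Hsp q => (WithLp.equiv 2 _ x).2) hf
      rw [← hMsnd]; simpa using h
    have hZ1 : mu1 q {k | ((m1 q k : ℝ) : ℂ) = lam} = 0 :=
      (withDensity_absolutelyContinuous volume _)
        (volume_level_zero hq (by norm_num : (-(1/2) : ℝ) ≠ 0) lam)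
    have hZ2 : mu2 q {k | ((m2 q k : ℝ) : ℂ) = lam} = 0 :=
      (withDensity_absolutelyContinuous volume _)
        (volume_level_zero hq (by norm_num : ((1/2) : ℝ) ≠ 0) lam)
    have hx1 : (WithLp.equiv 2 _ f).1 = 0 := eig_comp (mc1_meas q) _ (mc1_bound q hq) lam hZ1 _ h1
    have hx2 : (WithLp.equiv 2 _ f).2 = 0 := eig_comp (mc2_meas q) _ (mc2_bound q hq) lam hZ2 _ h2
    refine Hsp_ext ?_ ?_
    · rw [hx1]; rfl
    · rw [hx2]; rfl
  -- spectrum ⊆ Sset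
  have hsub1 : spectrum ℂ M ⊆ Sset := by
    intro lam hlam
    by_contra hnot
    have hSclosed : IsClosed Sset := (isCompact_Icc.image Complex.continuous_ofReal).isClosed
    have hSne : Sset.Nonempty := ⟨(0:ℂ), ⟨0, by constructor <;> norm_num, by norm_num⟩⟩
    set δ := Metric.infDist lam Sset with hδdef
    have hδpos : 0 < δ := (hSclosed.notMem_iff_infDist_pos hSne).1 hnot
    have hlb1 : ∀ k, δ ≤ ‖lam - ((m1 q k : ℝ) : ℂ)‖ := fun k => by
      have hmem : ((m1 q k : ℝ) : ℂ) ∈ Sset := ⟨m1 q k, m1_mem q hq k, rfl⟩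
      simpa [dist_eq_norm] using Metric.infDist_le_dist_of_mem hmem
    have hlb2 : ∀ k, δ ≤ ‖lam - ((m2 q k : ℝ) : ℂ)‖ := fun k => by
      have hmem : ((m2 q k : ℝ) : ℂ) ∈ Sset := ⟨m2 q k, m2_mem q hq k, rfl⟩
      simpa [dist_eq_norm] using Metric.infDist_le_dist_of_mem hmem
    have hne1 : ∀ k, lam - ((m1 q k : ℝ) : ℂ) ≠ 0 := fun k => by
      intro h; have := hlb1 k; rw [h, norm_zero] at this; linarith
    have hne2 : ∀ k, lam - ((m2 q k : ℝ) : ℂ) ≠ 0 := fun k => by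
      intro h; have := hlb2 k; rw [h, norm_zero] at this; linarith
    have hg1m : Measurable fun k => (lam - ((m1 q k : ℝ) : ℂ))⁻¹ :=
      (measurable_const.sub (mc1_meas q)).inv
    have hg2m : Measurable fun k => (lam - ((m2 q k : ℝ) : ℂ))⁻¹ :=
      (measurable_const.sub (mc2_meas q)).inv
    have hg1b : ∀ k, ‖(lam - ((m1 q k : ℝ) : ℂ))⁻¹‖ ≤ ((Real.toNNReal δ⁻¹ : ℝ≥0) : ℝ) := fun k => by
      rw [Real.coe_toNNReal _ (inv_nonneg.2 hδpos.le), norm_inv]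
      exact inv_anti₀ hδpos (hlb1 k)
    have hg2b : ∀ k, ‖(lam - ((m2 q k : ℝ) : ℂ))⁻¹‖ ≤ ((Real.toNNReal δ⁻¹ : ℝ≥0) : ℝ) := fun k => by
      rw [Real.coe_toNNReal _ (inv_nonneg.2 hδpos.le), norm_inv]
      exact inv_anti₀ hδpos (hlb2 k)
    set G1 := mulOp (mu1 q) (fun k => (lam - ((m1 q k : ℝ) : ℂ))⁻¹) hg1m _ hg1b with hG1
    set G2 := mulOp (mu2 q) (fun k => (lam - ((m2 q k : ℝ) : ℂ))⁻¹) hg2m _ hg2b with hG2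
    set N : Hsp q →L[ℂ] Hsp q :=
      pairOp q _ _ hg1m hg2m (Real.toNNReal δ⁻¹) hg1b hg2b with hNdef
    have hNfst : ∀ f : Hsp q, (WithLp.equiv 2 _ (N f)).1 = G1 (WithLp.equiv 2 _ f).1 :=
      fun f => rfl
    have hNsnd : ∀ f : Hsp q, (WithLp.equiv 2 _ (N f)).2 = G2 (WithLp.equiv 2 _ f).2 :=
      fun f => rfl
    set A := algebraMap ℂ (Hsp q →L[ℂ] Hsp q) lam - M with hA
    have hAN : A * N = 1 := by
      ext f
      rw [ContinuousLinearMap.mul_apply, ContinuousLinearMap.one_apply]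
      refine Hsp_ext ?_ ?_
      · rw [hA, equiv_aMap_sub_fst, hMfst, hNfst]
        refine Lp.ext ?_
        set x1 := (WithLp.equiv 2 _ f).1
        filter_upwards [Lp.coeFn_sub (lam • (G1 x1)) (T1 (G1 x1)), Lp.coeFn_smul lam (G1 x1),
          mulOp_coeFn _ (mc1_meas q) _ (mc1_bound q hq) (G1 x1),
          mulOp_coeFn _ hg1m _ hg1b x1] with k e1 e2 e3 e4
        rw [e1, Pi.sub_apply, e2, Pi.smul_apply, hT1] at *
        rw [e3, e4, smul_eq_mul]
        field_simp [hne1 k]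
      · rw [hA, equiv_aMap_sub_snd, hMsnd, hNsnd]
        refine Lp.ext ?_
        set x2 := (WithLp.equiv 2 _ f).2
        filter_upwards [Lp.coeFn_sub (lam • (G2 x2)) (T2 (G2 x2)), Lp.coeFn_smul lam (G2 x2),
          mulOp_coeFn _ (mc2_meas q) _ (mc2_bound q hq) (G2 x2),
          mulOp_coeFn _ hg2m _ hg2b x2] with k e1 e2 e3 e4
        rw [e1, Pi.sub_apply, e2, Pi.smul_apply, hT2] at *
        rw [e3, e4, smul_eq_mul]
        field_simp [hne2 k]
    have hNA : N * A = 1 := by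
      ext f
      rw [ContinuousLinearMap.mul_apply, ContinuousLinearMap.one_apply]
      refine Hsp_ext ?_ ?_
      · rw [hNfst, hA, equiv_aMap_sub_fst, hMfst]
        refine Lp.ext ?_
        set x1 := (WithLp.equiv 2 _ f).1
        filter_upwards [mulOp_coeFn _ hg1m _ hg1b (lam • x1 - T1 x1),
          Lp.coeFn_sub (lam • x1) (T1 x1), Lp.coeFn_smul lam x1,
          mulOp_coeFn _ (mc1_meas q) _ (mc1_bound q hq) x1] with k e1 e2 e3 e4
        rw [← hG1] at e1
        rw [e1, e2, Pi.sub_apply, e3, Pi.smul_apply, hT1] at *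
        rw [e4, smul_eq_mul]
        field_simp [hne1 k]
      · rw [hNsnd, hA, equiv_aMap_sub_snd, hMsnd]
        refine Lp.ext ?_
        set x2 := (WithLp.equiv 2 _ f).2
        filter_upwards [mulOp_coeFn _ hg2m _ hg2b (lam • x2 - T2 x2),
          Lp.coeFn_sub (lam • x2) (T2 x2), Lp.coeFn_smul lam x2,
          mulOp_coeFn _ (mc2_meas q) _ (mc2_bound q hq) x2] with k e1 e2 e3 e4
        rw [← hG2] at e1
        rw [e1, e2, Pi.sub_apply, e3, Pi.smul_apply, hT2] at *
        rw [e4, smul_eq_mul]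
        field_simp [hne2 k]
    exact (spectrum.mem_iff.1 hlam) ⟨⟨A, N, hAN, hNA⟩, hA⟩
  -- Sset ⊆ spectrum
  have hsub2 : Sset ⊆ spectrum ℂ M := by
    rintro _ ⟨t, ht, rfl⟩
    rw [spectrum.mem_iff]
    rintro ⟨u, hu⟩
    set B := ((↑u⁻¹ : Hsp q →L[ℂ] Hsp q)) with hB
    set A := algebraMap ℂ (Hsp q →L[ℂ] Hsp q) ((t:ℝ):ℂ) - M with hA
    have hBf : ∀ x : Hsp q, ‖x‖ ≤ ‖B‖ * ‖A x‖ := by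
      intro x
      have h1 : B (A x) = x := by
        rw [← hu, ← ContinuousLinearMap.mul_apply, hB, Units.inv_mul,
          ContinuousLinearMap.one_apply]
      calc ‖x‖ = ‖B (A x)‖ := by rw [h1]
        _ ≤ ‖B‖ * ‖A x‖ := ContinuousLinearMap.le_opNorm _ _
    set ε := 1/(2*(‖B‖+1)) with hε
    have hεpos : 0 < ε := by
      rw [hε]; positivity
    have hB1 : ‖B‖ * ε ≤ 1/2 := by
      rw [hε, mul_one_div, div_le_div_iff₀ (by positivity) (by norm_num)]
      nlinarith [norm_nonneg B]
    rcases le_or_gt 0 t with htpos | htneg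
    · -- second component
      obtain ⟨a, b, ha, hab, hkb⟩ := exists_interval q hq hεpos htpos ht.2
      obtain ⟨hpos, hfin⟩ := withDensity_Icc_pos_fin (w2 q) hab
        (by
          have hb0 : (0:ℝ) < b := lt_trans ha hab
          positivity : (0:ℝ) < 1/(2*b))
        (fun k hk => (w2_bounds q hq ha hk).1) (fun k hk => (w2_bounds q hq ha hk).2)
      have hpos' : (0:ℝ≥0∞) < mu2 q (Icc a b) := hpos
      have hfin' : mu2 q (Icc a b) ≠ ∞ := hfin
      set f0 : Lp ℂ 2 (mu2 q) := indicatorConstLp 2 measurableSet_Icc hfin' (1:ℂ) with hf0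
      have hf0pos : 0 < ‖f0‖ := by
        rw [hf0, norm_indicatorConstLp (by norm_num) (by norm_num)]
        have h1 : (0:ℝ) < ((mu2 q) (Icc a b)).toReal := ENNReal.toReal_pos hpos'.ne' hfin'
        have h2 : (0:ℝ) < ((mu2 q) (Icc a b)).toReal ^ (1/(2:ℝ≥0∞).toReal) :=
          Real.rpow_pos_of_pos h1 _
        simpa [measureReal_def] using h2
      set f : Hsp q := (WithLp.equiv 2 _).symm (0, f0) with hfdef
      have hffst : (WithLp.equiv 2 _ f).1 = 0 := rfl
      have hfsnd : (WithLp.equiv 2 _ f).2 = f0 := rfl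
      have hAf1 : (WithLp.equiv 2 _ (A f)).1 = 0 := by
        rw [hA, equiv_aMap_sub_fst, hMfst, hffst, map_zero, smul_zero, sub_zero]
      have hAf2 : (WithLp.equiv 2 _ (A f)).2 = ((t:ℝ):ℂ) • f0 - T2 f0 := by
        rw [hA, equiv_aMap_sub_snd, hMsnd, hfsnd]
      have hAfnorm : ‖A f‖ = ‖(WithLp.equiv 2 _ (A f)).2‖ := by
        have heq : A f = (WithLp.equiv 2 _).symm (0, (WithLp.equiv 2 _ (A f)).2) := by
          refine Hsp_ext ?_ rfl
          simpa using hAf1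
        conv_lhs => rw [heq]
        rw [norm_pair_snd]
      have hbS : ∀ k ∈ Icc a b, ‖((t:ℝ):ℂ) - ((m2 q k : ℝ) : ℂ)‖ ≤ ε := by
        intro k hk
        have hk0 : 0 < k := lt_of_lt_of_le ha hk.1
        have habs : |k| = k := abs_of_pos hk0
        have hcast : ((t:ℝ):ℂ) - ((m2 q k : ℝ) : ℂ) = (((t - m2 q k):ℝ):ℂ) := by push_cast; ring
        rw [hcast, Complex.norm_real, Real.norm_eq_abs, abs_sub_comm, m2, habs]
        exact hkb k hk
      have hcomp : ‖(WithLp.equiv 2 _ (A f)).2‖ ≤ ε * ‖f0‖ := by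
        rw [hAf2, hf0, hT2]
        exact indicator_comp_bound _ (mc2_meas q) _ (mc2_bound q hq) _ measurableSet_Icc hfin'
          hεpos.le hbS
      have hfn : ‖f‖ = ‖f0‖ := by rw [hfdef, norm_pair_snd]
      have final : ‖f0‖ ≤ ‖B‖ * (ε * ‖f0‖) := by
        calc ‖f0‖ = ‖f‖ := hfn.symm
          _ ≤ ‖B‖ * ‖A f‖ := hBf f
          _ = ‖B‖ * ‖(WithLp.equiv 2 _ (A f)).2‖ := by rw [hAfnorm]
          _ ≤ ‖B‖ * (ε * ‖f0‖) := mul_le_mul_of_nonneg_left hcomp (norm_nonneg B)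
      nlinarith [mul_le_mul_of_nonneg_right hB1 hf0pos.le]
    · -- first component
      obtain ⟨a, b, ha, hab, hkb⟩ := exists_interval q hq hεpos
        (s := -t) (by linarith) (by linarith [ht.1])
      obtain ⟨hpos, hfin⟩ := withDensity_Icc_pos_fin (w1 q) hab
        (by
          have hlt : Real.exp (-(q*a)) < 1 := Real.exp_lt_one_iff.2 (by nlinarith)
          have hb0 : (0:ℝ) < b := lt_trans ha hab
          exact div_pos (by linarith) (by linarith) : (0:ℝ) < (1 - Real.exp (-(q*a)))/(2*b))
        (fun k hk => (w1_bounds q hq ha hk).1) (fun k hk => (w1_bounds q hq ha hk).2)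
      have hpos' : (0:ℝ≥0∞) < mu1 q (Icc a b) := hpos
      have hfin' : mu1 q (Icc a b) ≠ ∞ := hfin
      set f0 : Lp ℂ 2 (mu1 q) := indicatorConstLp 2 measurableSet_Icc hfin' (1:ℂ) with hf0
      have hf0pos : 0 < ‖f0‖ := by
        rw [hf0, norm_indicatorConstLp (by norm_num) (by norm_num)]
        have h1 : (0:ℝ) < ((mu1 q) (Icc a b)).toReal := ENNReal.toReal_pos hpos'.ne' hfin'
        have h2 : (0:ℝ) < ((mu1 q) (Icc a b)).toReal ^ (1/(2:ℝ≥0∞).toReal) :=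
          Real.rpow_pos_of_pos h1 _
        simpa [measureReal_def] using h2
      set f : Hsp q := (WithLp.equiv 2 _).symm (f0, 0) with hfdef
      have hffst : (WithLp.equiv 2 _ f).1 = f0 := rfl
      have hfsnd : (WithLp.equiv 2 _ f).2 = 0 := rfl
      have hAf2 : (WithLp.equiv 2 _ (A f)).2 = 0 := by
        rw [hA, equiv_aMap_sub_snd, hMsnd, hfsnd, map_zero, smul_zero, sub_zero]
      have hAf1 : (WithLp.equiv 2 _ (A f)).1 = ((t:ℝ):ℂ) • f0 - T1 f0 := by
        rw [hA, equiv_aMap_sub_fst, hMfst, hffst]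
      have hAfnorm : ‖A f‖ = ‖(WithLp.equiv 2 _ (A f)).1‖ := by
        have heq : A f = (WithLp.equiv 2 _).symm ((WithLp.equiv 2 _ (A f)).1, 0) := by
          refine Hsp_ext rfl ?_
          simpa using hAf2
        conv_lhs => rw [heq]
        rw [norm_pair_fst]
      have hbS : ∀ k ∈ Icc a b, ‖((t:ℝ):ℂ) - ((m1 q k : ℝ) : ℂ)‖ ≤ ε := by
        intro k hk
        have hk0 : 0 < k := lt_of_lt_of_le ha hk.1
        have habs : |k| = k := abs_of_pos hk0
        have hcast : ((t:ℝ):ℂ) - ((m1 q k : ℝ) : ℂ) = (((t - m1 q k):ℝ):ℂ) := by push_cast; ring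
        rw [hcast, Complex.norm_real, Real.norm_eq_abs]
        have heq : t - m1 q k = 1/2 * Real.exp (-(q*k)) - (-t) := by rw [m1, habs]; ring
        rw [heq]
        exact hkb k hk
      have hcomp : ‖(WithLp.equiv 2 _ (A f)).1‖ ≤ ε * ‖f0‖ := by
        rw [hAf1, hf0, hT1]
        exact indicator_comp_bound _ (mc1_meas q) _ (mc1_bound q hq) _ measurableSet_Icc hfin'
          hεpos.le hbS
      have hfn : ‖f‖ = ‖f0‖ := by rw [hfdef, norm_pair_fst]
      have final : ‖f0‖ ≤ ‖B‖ * (ε * ‖f0‖) := by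
        calc ‖f0‖ = ‖f‖ := hfn.symm
          _ ≤ ‖B‖ * ‖A f‖ := hBf f
          _ = ‖B‖ * ‖(WithLp.equiv 2 _ (A f)).1‖ := by rw [hAfnorm]
          _ ≤ ‖B‖ * (ε * ‖f0‖) := mul_le_mul_of_nonneg_left hcomp (norm_nonneg B)
      nlinarith [mul_le_mul_of_nonneg_right hB1 hf0pos.le]
  refine ⟨M, fun f => ⟨?_, ?_⟩, Set.Subset.antisymm hsub1 hsub2, hno⟩
  · rw [hMfst f, hT1]
    exact mulOp_coeFn _ _ _ _ _
  · rw [hMsnd f, hT2]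
    exact mulOp_coeFn _ _ _ _ _
end
end

section
/- Let q > 0 and let H, E(t) be as in the context, and let f = (f₁, f₂) ∈ H with f₁ and f₂ continuous on ℝ. Then the function e_f(t) = ⟨f, E(t) f⟩ is differentiable at every t ∈ (-1/2, 0) ∪ (0, 1/2), with derivative e_f'(t) = (1 + 2t)/(2 |t| · |ln(2|t|)|) · ( |f₁(s_t)|² + |f₁(-s_t)|² ) for t ∈ (-1/2, 0), and e_f'(t) = (1 + 2t)/(2 t · |ln(2t)|) · ( |f₂(s_t)|² + |f₂(-s_t)|² ) for t ∈ (0, 1/2), where s_t = |ln(2|t|)|/q. -/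
open MeasureTheory Set
open scoped NNReal ENNReal

noncomputable section

/-- `A₁(t) = {k : -(1/2)e^{-q|k|} ≤ t}`. -/
def A1 (q t : ℝ) : Set ℝ := {k | m1 q k ≤ t}

/-- `A₂(t) = {k : (1/2)e^{-q|k|} ≤ t}`. -/
def A2 (q t : ℝ) : Set ℝ := {k | m2 q k ≤ t}

/-- `e_f(t) = ⟨f, E(t) f⟩` for `f = (f₁, f₂) ∈ H = L²(μ₁) × L²(μ₂)`, where
`E(t)(f₁,f₂) = (1_{A₁(t)} f₁, 1_{A₂(t)} f₂)`. -/
def eSpec (q : ℝ) (f₁ f₂ : ℝ → ℂ) (t : ℝ) : ℝ :=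
  (∫ k in A1 q t, ‖f₁ k‖ ^ 2 ∂(mu1 q)) + (∫ k in A2 q t, ‖f₂ k‖ ^ 2 ∂(mu2 q))

/-! ### Auxiliary lemmas -/

lemma measurable_w1 (q : ℝ) : Measurable (w1 q) := by unfold w1; fun_prop
lemma measurable_w2 (q : ℝ) : Measurable (w2 q) := by unfold w2; fun_prop

lemma w1_nonneg {q : ℝ} (hq : 0 ≤ q) (k : ℝ) : 0 ≤ w1 q k := by
  unfold w1
  apply div_nonneg _ (by positivity)
  have : Real.exp (-(q * |k|)) ≤ 1 := Real.exp_le_one_iff.mpr (neg_nonpos.mpr (by positivity))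
  linarith

lemma w2_nonneg (q k : ℝ) : 0 ≤ w2 q k := by
  unfold w2
  apply div_nonneg _ (by positivity)
  positivity

lemma generic_setIntegral (w : ℝ → ℝ) (hw : Measurable w) (hw0 : ∀ k, 0 ≤ w k)
    (g : ℝ → ℝ) {S : Set ℝ} (hS : MeasurableSet S) :
    ∫ k in S, g k ∂(volume.withDensity fun k => ENNReal.ofReal (w k)) =
      ∫ k in S, w k * g k := by
  have h : (fun k => ENNReal.ofReal (w k)) = fun k => ((fun k => (w k).toNNReal) k : ℝ≥0∞) := rfl
  rw [h, setIntegral_withDensity_eq_setIntegral_smul hw.real_toNNReal g hS]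
  refine integral_congr_ae (Filter.Eventually.of_forall fun k => ?_)
  simp [NNReal.smul_def, Real.coe_toNNReal _ (hw0 k)]

lemma generic_integrable (w : ℝ → ℝ) (hw : Measurable w) (hw0 : ∀ k, 0 ≤ w k)
    (f : ℝ → ℂ) (hf : MemLp f 2 (volume.withDensity fun k => ENNReal.ofReal (w k))) :
    Integrable (fun k => w k * ‖f k‖ ^ 2) volume := by
  have h1 : Integrable (fun k => ‖f k‖ ^ ((2:ℝ≥0∞)).toReal)
      (volume.withDensity fun k => ENNReal.ofReal (w k)) :=
    hf.integrable_norm_rpow two_ne_zero ENNReal.ofNat_ne_top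
  rw [integrable_withDensity_iff (by fun_prop)
    (Filter.Eventually.of_forall fun x => ENNReal.ofReal_lt_top)] at h1
  refine h1.congr (Filter.Eventually.of_forall fun k => ?_)
  simp only [ENNReal.toReal_ofReal (hw0 k), ENNReal.toReal_ofNat, Real.rpow_two,
    Real.rpow_natCast]
  ring

lemma A1_eq_Icc {q t s : ℝ} (hq : 0 < q) (ht : t < 0) (hs : s = -Real.log (-(2*t)) / q) :
    A1 q t = Icc (-s) s := by
  ext k
  simp only [A1, m1, mem_setOf_eq, mem_Icc, ← abs_le]
  have hexp := Real.exp_pos (-(q*|k|))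
  have h2t : (0:ℝ) < -(2*t) := by linarith
  rw [hs, le_div_iff₀ hq]
  have hcm : |k| * q = q * |k| := mul_comm _ _
  constructor
  · intro h
    have h' : -(2*t) ≤ Real.exp (-(q*|k|)) := by linarith
    have h'' := (Real.log_le_iff_le_exp h2t).mpr h'
    linarith
  · intro h
    have h'' : Real.log (-(2*t)) ≤ -(q*|k|) := by linarith
    have h' := (Real.log_le_iff_le_exp h2t).mp h''
    linarith

lemma A2_eq_empty {q t : ℝ} (ht : t < 0) : A2 q t = ∅ := by
  ext k
  simp only [A2, m2, mem_setOf_eq, mem_empty_iff_false, iff_false, not_le]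
  nlinarith [Real.exp_pos (-(q*|k|))]

lemma A1_eq_univ {q t : ℝ} (ht : 0 < t) : A1 q t = univ := by
  ext k
  simp only [A1, m1, mem_setOf_eq, mem_univ, iff_true]
  nlinarith [Real.exp_pos (-(q*|k|))]

lemma A2_eq_compl {q t s : ℝ} (hq : 0 < q) (ht : 0 < t) (hs : s = -Real.log (2*t) / q) :
    A2 q t = (Ioo (-s) s)ᶜ := by
  ext k
  simp only [A2, m2, mem_setOf_eq, mem_compl_iff, mem_Ioo, not_and_or, not_lt]
  have h2t : (0:ℝ) < 2*t := by linarith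
  have hcm : |k| * q = q * |k| := mul_comm _ _
  rw [hs]
  constructor
  · intro h
    have h1 : Real.exp (-(q*|k|)) ≤ 2*t := by linarith
    have h2 : -(q*|k|) ≤ Real.log (2*t) := (Real.le_log_iff_exp_le h2t).mpr h1
    have h3 : -Real.log (2*t) / q ≤ |k| := by rw [div_le_iff₀ hq]; linarith
    rcases le_abs.mp h3 with h4 | h4
    · right; exact h4
    · left; linarith
  · intro h
    have h3 : -Real.log (2*t) / q ≤ |k| := by
      rcases h with h4 | h4
      · exact le_abs.mpr (Or.inr (by linarith))
      · exact le_abs.mpr (Or.inl h4)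
    have h2 : -(q*|k|) ≤ Real.log (2*t) := by
      have := (div_le_iff₀ hq).mp h3; linarith
    have h1 : Real.exp (-(q*|k|)) ≤ 2*t := (Real.le_log_iff_exp_le h2t).mp h2
    linarith

/-- FTC helper: derivative of `u ↦ ∫_0^u g`. -/
lemma hasDerivAt_primitive (g : ℝ → ℝ) (hgint : Integrable g volume)
    (hgmeas : Measurable g) {v : ℝ} (hgcont : ContinuousAt g v) :
    HasDerivAt (fun u : ℝ => ∫ x in (0:ℝ)..u, g x) (g v) v :=
  intervalIntegral.integral_hasDerivAt_right hgint.intervalIntegrable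
    ⟨univ, Filter.univ_mem, hgmeas.aestronglyMeasurable.restrict⟩ hgcont

/-- Rewrite a symmetric set integral via the primitive. -/
lemma integral_Icc_symm (g : ℝ → ℝ) (hgint : Integrable g volume) {s : ℝ} (hs : 0 ≤ s) :
    ∫ x in Icc (-s) s, g x =
      (∫ x in (0:ℝ)..s, g x) - ∫ x in (0:ℝ)..(-s), g x := by
  rw [integral_Icc_eq_integral_Ioc,
    ← intervalIntegral.integral_of_le (by linarith : -s ≤ s),
    ← intervalIntegral.integral_add_adjacent_intervals
      (hgint.intervalIntegrable (a := -s) (b := 0)) (hgint.intervalIntegrable (a := 0) (b := s)),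
    intervalIntegral.integral_symm (-s) 0]
  ring

lemma integral_Ioo_symm (g : ℝ → ℝ) (hgint : Integrable g volume) {s : ℝ} (hs : 0 ≤ s) :
    ∫ x in Ioo (-s) s, g x =
      (∫ x in (0:ℝ)..s, g x) - ∫ x in (0:ℝ)..(-s), g x := by
  rw [setIntegral_congr_set Ioo_ae_eq_Ioc,
    ← intervalIntegral.integral_of_le (by linarith : -s ≤ s),
    ← intervalIntegral.integral_add_adjacent_intervals
      (hgint.intervalIntegrable (a := -s) (b := 0)) (hgint.intervalIntegrable (a := 0) (b := s)),
    intervalIntegral.integral_symm (-s) 0]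
  ring

/-- For `f = (f₁,f₂) ∈ H` with `f₁, f₂` continuous,
`e_f(t) = ⟨f, E(t) f⟩` is differentiable on `(-1/2,0) ∪ (0,1/2)`, with the explicit
derivative given by the spectral density of Lemma 3.6 of the paper, where
`s_t = |ln(2|t|)|/q`. -/
theorem neumannPoincare_crescent_spectral_density
    (q : ℝ) (hq : 0 < q) (f₁ f₂ : ℝ → ℂ)
    (hf₁ : MemLp f₁ 2 (mu1 q)) (hf₂ : MemLp f₂ 2 (mu2 q))
    (hc₁ : Continuous f₁) (hc₂ : Continuous f₂) :
    (∀ t ∈ Ioo (-(1/2) : ℝ) 0,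
      HasDerivAt (eSpec q f₁ f₂)
        ((1 + 2*t) / (2 * |t| * |Real.log (2*|t|)|) *
          (‖f₁ (|Real.log (2*|t|)| / q)‖ ^ 2 + ‖f₁ (-(|Real.log (2*|t|)| / q))‖ ^ 2)) t) ∧
    (∀ t ∈ Ioo (0 : ℝ) (1/2),
      HasDerivAt (eSpec q f₁ f₂)
        ((1 + 2*t) / (2 * t * |Real.log (2*t)|) *
          (‖f₂ (|Real.log (2*|t|)| / q)‖ ^ 2 + ‖f₂ (-(|Real.log (2*|t|)| / q))‖ ^ 2)) t) := by
  have hg1int : Integrable (fun k => w1 q k * ‖f₁ k‖ ^ 2) volume :=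
    generic_integrable (w1 q) (measurable_w1 q) (w1_nonneg hq.le) f₁ hf₁
  have hg2int : Integrable (fun k => w2 q k * ‖f₂ k‖ ^ 2) volume :=
    generic_integrable (w2 q) (measurable_w2 q) (w2_nonneg q) f₂ hf₂
  have hg1meas : Measurable (fun k => w1 q k * ‖f₁ k‖ ^ 2) :=
    (measurable_w1 q).mul (hc₁.norm.pow 2).measurable
  have hg2meas : Measurable (fun k => w2 q k * ‖f₂ k‖ ^ 2) :=
    (measurable_w2 q).mul (hc₂.norm.pow 2).measurable
  have hg1cont : ∀ v : ℝ, v ≠ 0 → ContinuousAt (fun k => w1 q k * ‖f₁ k‖ ^ 2) v := by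
    intro v hv
    refine ContinuousAt.mul ?_ ((hc₁.norm.pow 2).continuousAt)
    unfold w1
    exact ContinuousAt.div (by fun_prop) (by fun_prop)
      (mul_ne_zero two_ne_zero (abs_ne_zero.mpr hv))
  have hg2cont : ∀ v : ℝ, v ≠ 0 → ContinuousAt (fun k => w2 q k * ‖f₂ k‖ ^ 2) v := by
    intro v hv
    refine ContinuousAt.mul ?_ ((hc₂.norm.pow 2).continuousAt)
    unfold w2
    exact ContinuousAt.div (by fun_prop) (by fun_prop)
      (mul_ne_zero two_ne_zero (abs_ne_zero.mpr hv))
  constructor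
  · -- negative side
    intro t ht
    obtain ⟨ht1, ht2⟩ := ht
    have ht0 : t ≠ 0 := ht2.ne
    have hΦ : ∀ v : ℝ, v ≠ 0 →
        HasDerivAt (fun u : ℝ => ∫ x in (0:ℝ)..u, w1 q x * ‖f₁ x‖ ^ 2)
          (w1 q v * ‖f₁ v‖ ^ 2) v := fun v hv =>
      hasDerivAt_primitive _ hg1int hg1meas (hg1cont v hv)
    have hstd : HasDerivAt (fun u : ℝ => -Real.log (-(2*u)) / q) (-t⁻¹ / q) t := by
      have h2 : HasDerivAt (fun u : ℝ => -(2*u)) (-2) t := by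
        exact (((hasDerivAt_id' t).const_mul (2:ℝ)).neg).congr_deriv (by norm_num)
      have h3 := (Real.hasDerivAt_log (show -(2*t) ≠ 0 by
        intro h; exact ht0 (by linarith))).comp t h2
      simp only [Function.comp_def] at h3
      have hval : (-(2*t))⁻¹ * (-2) = t⁻¹ := by
        field_simp
      rw [hval] at h3
      exact h3.neg.div_const q
    have hlog0 : Real.log (-(2*t)) < 0 :=
      Real.log_neg (by linarith) (by linarith)
    have hs0 : (0:ℝ) < -Real.log (-(2*t)) / q := div_pos (by linarith) hq
    set s : ℝ := -Real.log (-(2*t)) / q with hsdef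
    have h1 : HasDerivAt (fun u : ℝ =>
        ∫ x in (0:ℝ)..(-Real.log (-(2*u)) / q), w1 q x * ‖f₁ x‖ ^ 2)
        ((w1 q s * ‖f₁ s‖ ^ 2) * (-t⁻¹ / q)) t := by
      have := (hΦ s hs0.ne').comp t hstd
      simpa [Function.comp_def] using this
    have h2 : HasDerivAt (fun u : ℝ =>
        ∫ x in (0:ℝ)..(-(-Real.log (-(2*u)) / q)), w1 q x * ‖f₁ x‖ ^ 2)
        ((w1 q (-s) * ‖f₁ (-s)‖ ^ 2) * (-(-t⁻¹ / q))) t := by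
      have := (hΦ (-s) (neg_ne_zero.mpr hs0.ne')).comp t hstd.neg
      simpa [Function.comp_def] using this
    have hF := h1.sub h2
    have hev : eSpec q f₁ f₂ =ᶠ[nhds t] fun u =>
        (∫ x in (0:ℝ)..(-Real.log (-(2*u)) / q), w1 q x * ‖f₁ x‖ ^ 2) -
        ∫ x in (0:ℝ)..(-(-Real.log (-(2*u)) / q)), w1 q x * ‖f₁ x‖ ^ 2 := by
      filter_upwards [Ioo_mem_nhds ht1 ht2] with u hu
      obtain ⟨hu1, hu2⟩ := hu
      have hlu : Real.log (-(2*u)) < 0 := Real.log_neg (by linarith) (by linarith)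
      have hsu0 : (0:ℝ) ≤ -Real.log (-(2*u)) / q := le_of_lt (div_pos (by linarith) hq)
      simp only [eSpec]
      rw [A1_eq_Icc (q := q) hq hu2 rfl, A2_eq_empty (q := q) hu2]
      rw [show (∫ k in (∅:Set ℝ), ‖f₂ k‖ ^ 2 ∂(mu2 q)) = 0 by simp, add_zero]
      rw [show mu1 q = volume.withDensity fun k => ENNReal.ofReal (w1 q k) from rfl]
      rw [generic_setIntegral (w1 q) (measurable_w1 q) (w1_nonneg hq.le) _ measurableSet_Icc]
      exact integral_Icc_symm _ hg1int hsu0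
    have hder := hF.congr_of_eventuallyEq hev
    refine hder.congr_deriv ?_; symm
    -- algebraic identification of the derivative value
    have hlt : |t| = -t := abs_of_neg ht2
    have h2t : (2:ℝ) * |t| = -(2*t) := by rw [hlt]; ring
    have hL : |Real.log (2*|t|)| = -Real.log (-(2*t)) := by
      rw [h2t, abs_of_neg hlog0]
    have hqs : -Real.log (-(2*t)) = q * s := by rw [hsdef]; field_simp
    have hexp : Real.exp (-(q*s)) = -(2*t) := by
      have hl : Real.log (-(2*t)) = -(q*s) := by linarith
      rw [← hl]
      exact Real.exp_log (by linarith)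
    rw [hL, hlt, ← hsdef]
    unfold w1
    simp only [abs_neg, abs_of_pos hs0]
    rw [hqs, hexp]
    have hsne : s ≠ 0 := hs0.ne'
    field_simp
    ring
  · -- positive side
    intro t ht
    obtain ⟨ht1, ht2⟩ := ht
    have ht0 : t ≠ 0 := ht1.ne'
    have hΦ : ∀ v : ℝ, v ≠ 0 →
        HasDerivAt (fun u : ℝ => ∫ x in (0:ℝ)..u, w2 q x * ‖f₂ x‖ ^ 2)
          (w2 q v * ‖f₂ v‖ ^ 2) v := fun v hv =>
      hasDerivAt_primitive _ hg2int hg2meas (hg2cont v hv)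
    have hstd : HasDerivAt (fun u : ℝ => -Real.log (2*u) / q) (-t⁻¹ / q) t := by
      have h2 : HasDerivAt (fun u : ℝ => 2*u) 2 t := by
        simpa using (hasDerivAt_id t).const_mul (2:ℝ)
      have h3 := (Real.hasDerivAt_log (show 2*t ≠ 0 by positivity)).comp t h2
      simp only [Function.comp_def] at h3
      have hval : (2*t)⁻¹ * 2 = t⁻¹ := by
        field_simp
      rw [hval] at h3
      exact h3.neg.div_const q
    have hlog0 : Real.log (2*t) < 0 :=
      Real.log_neg (by linarith) (by linarith)
    have hs0 : (0:ℝ) < -Real.log (2*t) / q := div_pos (by linarith) hq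
    set s : ℝ := -Real.log (2*t) / q with hsdef
    have h1 : HasDerivAt (fun u : ℝ =>
        ∫ x in (0:ℝ)..(-Real.log (2*u) / q), w2 q x * ‖f₂ x‖ ^ 2)
        ((w2 q s * ‖f₂ s‖ ^ 2) * (-t⁻¹ / q)) t := by
      have := (hΦ s hs0.ne').comp t hstd
      simpa [Function.comp_def] using this
    have h2 : HasDerivAt (fun u : ℝ =>
        ∫ x in (0:ℝ)..(-(-Real.log (2*u) / q)), w2 q x * ‖f₂ x‖ ^ 2)
        ((w2 q (-s) * ‖f₂ (-s)‖ ^ 2) * (-(-t⁻¹ / q))) t := by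
      have := (hΦ (-s) (neg_ne_zero.mpr hs0.ne')).comp t hstd.neg
      simpa [Function.comp_def] using this
    have hF := (h1.sub h2).const_sub
      ((∫ k, ‖f₁ k‖ ^ 2 ∂(mu1 q)) + ∫ x, w2 q x * ‖f₂ x‖ ^ 2)
    have hev : eSpec q f₁ f₂ =ᶠ[nhds t] fun u =>
        ((∫ k, ‖f₁ k‖ ^ 2 ∂(mu1 q)) + ∫ x, w2 q x * ‖f₂ x‖ ^ 2) -
        ((∫ x in (0:ℝ)..(-Real.log (2*u) / q), w2 q x * ‖f₂ x‖ ^ 2) -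
        ∫ x in (0:ℝ)..(-(-Real.log (2*u) / q)), w2 q x * ‖f₂ x‖ ^ 2) := by
      filter_upwards [Ioo_mem_nhds ht1 ht2] with u hu
      obtain ⟨hu1, hu2⟩ := hu
      have hlu : Real.log (2*u) < 0 := Real.log_neg (by linarith) (by linarith)
      have hsu0 : (0:ℝ) ≤ -Real.log (2*u) / q := le_of_lt (div_pos (by linarith) hq)
      simp only [eSpec]
      rw [A1_eq_univ (q := q) hu1, Measure.restrict_univ]
      rw [A2_eq_compl (q := q) hq hu1 rfl]
      rw [show mu2 q = volume.withDensity fun k => ENNReal.ofReal (w2 q k) from rfl]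
      rw [generic_setIntegral (w2 q) (measurable_w2 q) (w2_nonneg q) _ measurableSet_Ioo.compl]
      rw [setIntegral_compl measurableSet_Ioo hg2int]
      rw [integral_Ioo_symm _ hg2int hsu0]
      ring
    have hder := hF.congr_of_eventuallyEq hev
    refine hder.congr_deriv ?_; symm
    have hlt : |t| = t := abs_of_pos ht1
    have hL : |Real.log (2*|t|)| = -Real.log (2*t) := by
      rw [hlt, abs_of_neg hlog0]
    have hL2 : |Real.log (2*t)| = -Real.log (2*t) := abs_of_neg hlog0
    have hqs : -Real.log (2*t) = q * s := by rw [hsdef]; field_simp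
    have hexp : Real.exp (-(q*s)) = 2*t := by
      have hl : Real.log (2*t) = -(q*s) := by linarith
      rw [← hl]
      exact Real.exp_log (by linarith)
    rw [hL, hL2, ← hsdef]
    unfold w2
    simp only [abs_neg, abs_of_pos hs0]
    rw [hqs, hexp]
    have hsne : s ≠ 0 := hs0.ne'
    field_simp
    ring
end
end

section
/- Let q > 0 and let H, E(t) be as in the context. For every f ∈ H, the Lebesgue–Stieltjes measure μ_f of the nondecreasing right-continuous function e_f(t) = ⟨f, E(t) f⟩ (extended by 0 below -1/2 and by ‖f‖² above 1/2) is absolutely continuous with respect to Lebesgue measure on ℝ. Hence the multiplication operator M(f₁,f₂) = (-(1/2)e^{-q|k|} f₁, (1/2)e^{-q|k|} f₂), whose spectral family is E(t), has purely absolutely continuous spectral measures. -/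
open MeasureTheory Set Filter
open scoped Topology ENNReal

noncomputable section

/-- Preimage of a Lebesgue-null set under `k ↦ c e^{-q|k|}` (with `c ≠ 0`) is null. -/
lemma exp_abs_preimage_null (q c : ℝ) (hq : 0 < q) (hc : c ≠ 0)
    (N : Set ℝ) (hN : volume N = 0) :
    volume ((fun k => c * Real.exp (-(q * |k|))) ⁻¹' N) = 0 := by
  set g : ℝ → ℝ := fun t => -Real.log (t / c) / q with hg_def
  set M : Set ℝ := N ∩ {t : ℝ | t / c ∈ Ioo (0:ℝ) 1} with hM_def
  have hMnull : volume M = 0 := measure_mono_null inter_subset_left hN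
  have hgdiff : DifferentiableOn ℝ g M := by
    intro t ht
    have h1 : t / c ≠ 0 := ne_of_gt ht.2.1
    exact (((differentiableAt_id.div_const c).log h1).neg.div_const q).differentiableWithinAt
  have h1 : volume (g '' M) = 0 :=
    MeasureTheory.addHaar_image_eq_zero_of_differentiableOn_of_addHaar_eq_zero volume hgdiff hMnull
  have h2 : volume ((fun t => -g t) '' M) = 0 :=
    MeasureTheory.addHaar_image_eq_zero_of_differentiableOn_of_addHaar_eq_zero volume hgdiff.neg hMnull
  have hsub : (fun k => c * Real.exp (-(q * |k|))) ⁻¹' N ⊆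
      ({0} : Set ℝ) ∪ (g '' M ∪ (fun t => -g t) '' M) := by
    intro k hk
    rcases eq_or_ne k 0 with hk0 | hk0
    · exact Or.inl hk0
    · right
      have habs : 0 < |k| := abs_pos.mpr hk0
      have hlt : Real.exp (-(q * |k|)) < 1 := by
        rw [Real.exp_lt_one_iff]; nlinarith
      have hpos : 0 < Real.exp (-(q * |k|)) := Real.exp_pos _
      have hdc : (c * Real.exp (-(q * |k|))) / c = Real.exp (-(q * |k|)) :=
        mul_div_cancel_left₀ _ hc
      have htM : c * Real.exp (-(q * |k|)) ∈ M := by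
        refine ⟨hk, ?_⟩
        simp only [mem_setOf_eq, hdc]
        exact ⟨hpos, hlt⟩
      have hgt : g (c * Real.exp (-(q * |k|))) = |k| := by
        simp only [hg_def, hdc, Real.log_exp]
        field_simp
      rcases abs_cases k with ⟨h, _⟩ | ⟨h, _⟩
      · exact Or.inl ⟨_, htM, by rw [hgt, h]⟩
      · exact Or.inr ⟨_, htM, by simp only [hgt]; linarith⟩
  refine measure_mono_null hsub ?_
  refine measure_union_null (by simp) (measure_union_null h1 h2)

/-- For every `f = (f₁,f₂) ∈ H`, the nondecreasing right-continuous
function `e_f(t) = ⟨f, E(t) f⟩` (which vanishes below `-1/2` and equals `‖f‖²` above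
`1/2`) is a Stieltjes function whose Lebesgue–Stieltjes measure is absolutely continuous
with respect to Lebesgue measure: the multiplication operator
`M(f₁,f₂) = (-(1/2)e^{-q|k|} f₁, (1/2)e^{-q|k|} f₂)`, whose spectral family is `E(t)`,
has purely absolutely continuous spectral measures. -/
theorem neumannPoincare_crescent_spectral_measures_absolutely_continuous
    (q : ℝ) (hq : 0 < q) (f₁ f₂ : ℝ → ℂ)
    (hf₁ : MemLp f₁ 2 (mu1 q)) (hf₂ : MemLp f₂ 2 (mu2 q)) :
    ∃ S : StieltjesFunction ℝ,
      (∀ t : ℝ, S t = eSpec q f₁ f₂ t) ∧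
      S.measure ≪ (volume : Measure ℝ) := by
  classical
  set ν₁ : Measure ℝ := (mu1 q).withDensity (fun k => ENNReal.ofReal (‖f₁ k‖ ^ 2)) with hν₁def
  set ν₂ : Measure ℝ := (mu2 q).withDensity (fun k => ENNReal.ofReal (‖f₂ k‖ ^ 2)) with hν₂def
  have hm1 : Measurable (m1 q) := by
    unfold m1; fun_prop
  have hm2 : Measurable (m2 q) := by
    unfold m2; fun_prop
  have hint₁ : Integrable (fun k => ‖f₁ k‖ ^ 2) (mu1 q) := by
    have := hf₁.integrable_norm_rpow two_ne_zero ENNReal.ofNat_ne_top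
    simpa [ENNReal.toReal_ofNat, Real.rpow_natCast] using this
  have hint₂ : Integrable (fun k => ‖f₂ k‖ ^ 2) (mu2 q) := by
    have := hf₂.integrable_norm_rpow two_ne_zero ENNReal.ofNat_ne_top
    simpa [ENNReal.toReal_ofNat, Real.rpow_natCast] using this
  have hfin₁ : IsFiniteMeasure ν₁ := by
    constructor
    rw [hν₁def, withDensity_apply _ MeasurableSet.univ, Measure.restrict_univ]
    exact hint₁.lintegral_lt_top
  have hfin₂ : IsFiniteMeasure ν₂ := by
    constructor
    rw [hν₂def, withDensity_apply _ MeasurableSet.univ, Measure.restrict_univ]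
    exact hint₂.lintegral_lt_top
  set ρ : Measure ℝ := ν₁.map (m1 q) + ν₂.map (m2 q) with hρdef
  haveI : IsFiniteMeasure (ν₁.map (m1 q)) := by
    constructor
    rw [Measure.map_apply hm1 MeasurableSet.univ]
    exact (measure_mono (subset_univ _)).trans_lt (measure_lt_top _ _)
  haveI : IsFiniteMeasure (ν₂.map (m2 q)) := by
    constructor
    rw [Measure.map_apply hm2 MeasurableSet.univ]
    exact (measure_mono (subset_univ _)).trans_lt (measure_lt_top _ _)
  haveI : IsFiniteMeasure ρ := by rw [hρdef]; infer_instance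
  have hA1meas : ∀ t, MeasurableSet (A1 q t) := fun t => hm1 measurableSet_Iic
  have hA2meas : ∀ t, MeasurableSet (A2 q t) := fun t => hm2 measurableSet_Iic
  have hIic : ∀ t, ρ (Iic t) = ν₁ (A1 q t) + ν₂ (A2 q t) := by
    intro t
    rw [hρdef, Measure.add_apply, Measure.map_apply hm1 measurableSet_Iic,
      Measure.map_apply hm2 measurableSet_Iic]
    rfl
  -- value identity
  have hval : ∀ t, (ρ (Iic t)).toReal = eSpec q f₁ f₂ t := by
    intro t
    rw [hIic t, ENNReal.toReal_add (measure_ne_top _ _) (measure_ne_top _ _)]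
    unfold eSpec
    congr 1
    · rw [hν₁def, withDensity_apply _ (hA1meas t),
        integral_eq_lintegral_of_nonneg_ae (Eventually.of_forall fun k => by positivity)
          (((hf₁.1.norm.aemeasurable.pow_const 2).aestronglyMeasurable).restrict)]
    · rw [hν₂def, withDensity_apply _ (hA2meas t),
        integral_eq_lintegral_of_nonneg_ae (Eventually.of_forall fun k => by positivity)
          (((hf₂.1.norm.aemeasurable.pow_const 2).aestronglyMeasurable).restrict)]
  have hmono : Monotone (fun t => (ρ (Iic t)).toReal) := fun a b hab =>
    ENNReal.toReal_mono (measure_ne_top _ _) (measure_mono (Iic_subset_Iic.mpr hab))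
  have hrc : ∀ a : ℝ, ContinuousWithinAt (fun t => (ρ (Iic t)).toReal) (Ici a) a := by
    intro a
    have hseq : Tendsto (fun n : ℕ => (ρ (Iic (a + 1/(n+1)))).toReal) atTop
        (𝓝 ((ρ (Iic a)).toReal)) := by
      have hanti : Antitone (fun n : ℕ => Iic (a + 1/((n:ℝ)+1))) := by
        intro m n hmn
        apply Iic_subset_Iic.mpr
        have hc : (m:ℝ) ≤ (n:ℝ) := Nat.cast_le.mpr hmn
        have : 1/((n:ℝ)+1) ≤ 1/((m:ℝ)+1) :=
          one_div_le_one_div_of_le (by positivity) (by linarith)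
        linarith
      have h0 : Tendsto (fun n : ℕ => ρ (Iic (a + 1/((n:ℝ)+1)))) atTop
          (𝓝 (ρ (⋂ n : ℕ, Iic (a + 1/((n:ℝ)+1))))) :=
        tendsto_measure_iInter_atTop (fun n => measurableSet_Iic.nullMeasurableSet)
          hanti ⟨0, measure_ne_top _ _⟩
      have hiInter : (⋂ n : ℕ, Iic (a + 1/((n:ℝ)+1))) = Iic a := by
        ext x
        simp only [mem_iInter, mem_Iic]
        constructor
        · intro h
          by_contra hx
          push_neg at hx
          obtain ⟨n, hn⟩ := exists_nat_one_div_lt (sub_pos.mpr hx)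
          have := h n
          linarith
        · intro h n
          have hp : (0:ℝ) < 1/((n:ℝ)+1) := by positivity
          linarith
      rw [hiInter] at h0
      exact (ENNReal.tendsto_toReal (measure_ne_top _ _)).comp h0
    rw [ContinuousWithinAt, tendsto_order]
    constructor
    · intro b hb
      filter_upwards [self_mem_nhdsWithin] with u hu
      exact lt_of_lt_of_le hb (hmono hu)
    · intro b hb
      obtain ⟨n, hn⟩ := (hseq.eventually_lt_const hb).exists
      have hlt : a < a + 1/((n:ℝ)+1) := by
        have : (0:ℝ) < 1/((n:ℝ)+1) := by positivity
        linarith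
      filter_upwards [Ico_mem_nhdsGE hlt] with u hu
      exact lt_of_le_of_lt (hmono (le_of_lt hu.2)) hn
  set S : StieltjesFunction ℝ := ⟨fun t => (ρ (Iic t)).toReal, hmono, hrc⟩ with hSdef
  refine ⟨S, fun t => hval t, ?_⟩
  have hSm : S.measure = ρ := by
    refine Measure.ext_of_Ioc _ _ (fun a b hab => ?_)
    rw [StieltjesFunction.measure_Ioc]
    have hsub : Iic a ⊆ Iic b := Iic_subset_Iic.mpr hab.le
    have htr : (ρ (Iic b) - ρ (Iic a)).toReal = (ρ (Iic b)).toReal - (ρ (Iic a)).toReal :=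
      ENNReal.toReal_sub_of_le (measure_mono hsub) (measure_ne_top _ _)
    have : S b - S a = (ρ (Iic b) - ρ (Iic a)).toReal := by
      rw [htr]
    rw [this, ENNReal.ofReal_toReal (by
      exact ne_top_of_le_ne_top (measure_ne_top _ _) tsub_le_self),
      ← measure_diff hsub measurableSet_Iic.nullMeasurableSet (measure_ne_top _ _)]
    rw [Iic_sdiff_Iic]
  rw [hSm]
  have hν₁ac : ν₁ ≪ (volume : Measure ℝ) :=
    (withDensity_absolutelyContinuous (mu1 q) _).trans (withDensity_absolutelyContinuous volume _)
  have hν₂ac : ν₂ ≪ (volume : Measure ℝ) :=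
    (withDensity_absolutelyContinuous (mu2 q) _).trans (withDensity_absolutelyContinuous volume _)
  refine Measure.AbsolutelyContinuous.mk (fun N hNm hN => ?_)
  have h1 : volume ((m1 q) ⁻¹' N) = 0 :=
    exp_abs_preimage_null q (-(1/2)) hq (by norm_num) N hN
  have h2 : volume ((m2 q) ⁻¹' N) = 0 :=
    exp_abs_preimage_null q (1/2) hq (by norm_num) N hN
  rw [hρdef, Measure.add_apply, Measure.map_apply hm1 hNm, Measure.map_apply hm2 hNm,
    hν₁ac h1, hν₂ac h2, add_zero]
end
end

section
/- Let R > r > 0. Let f_R, f_r ∈ L¹(ℝ;ℂ) ∩ L²(ℝ;ℂ) with ∫_ℝ f_R + ∫_ℝ f_r = 0. Then for every x ∈ (1/(2R), 1/(2r)) and every y ∈ ℝ, (1/(4π)) ∫_ℝ [ ln((x - 1/(2R))² + (y-t)²) - ln((1/(2R))² + t²) ] f_R(t) dt + (1/(4π)) ∫_ℝ [ ln((x - 1/(2r))² + (y-t)²) - ln((1/(2r))² + t²) ] f_r(t) dt = -(1/(4π)) ∫_ℝ (1/|k|) [ (e^{-|k|(x - 1/(2R))} e^{iky} - e^{-|k|/(2R)})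 f̂_R(k) + (e^{-|k|(1/(2r) - x)} e^{iky} - e^{-|k|/(2r)}) f̂_r(k) ] dk, where both sides are absolutely convergent integrals. -/
open MeasureTheory Set Real

noncomputable section
set_option maxHeartbeats 1000000


/-- The unnormalized Fourier transform `ĝ(k) = ∫ g(t) e^{-ikt} dt`. -/
def fourierHat (g : ℝ → ℂ) (k : ℝ) : ℂ :=
  ∫ t : ℝ, g t * Complex.exp (-(Complex.I * k * t))

lemma seg_re_pos {p q : ℂ} (hp : 0 < p.re) (hq : 0 < q.re) {θ : ℝ} (h0 : 0 ≤ θ) (h1 : θ ≤ 1) :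
    0 < (p + (θ:ℂ) * (q - p)).re := by
  simp only [Complex.add_re, Complex.mul_re, Complex.ofReal_re, Complex.ofReal_im,
    Complex.sub_re, Complex.sub_im, zero_mul, sub_zero]
  nlinarith [mul_nonneg h0 hq.le, mul_nonneg (sub_nonneg.mpr h1) hp.le]

lemma hasDerivAt_affine (p q : ℂ) (θ : ℝ) :
    HasDerivAt (fun θ : ℝ => p + (θ:ℂ) * (q - p)) (q - p) θ := by
  have h1 : HasDerivAt (fun θ : ℝ => (θ:ℂ)) 1 θ := Complex.ofRealCLM.hasDerivAt
  simpa using (h1.mul_const (q - p)).const_add p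

lemma seg_log_integral {p q : ℂ} (hp : 0 < p.re) (hq : 0 < q.re) :
    ∫ θ in (0:ℝ)..1, (q - p) / (p + (θ:ℂ) * (q - p)) = Complex.log q - Complex.log p := by
  have key : ∀ θ ∈ Set.uIcc (0:ℝ) 1,
      HasDerivAt (fun θ : ℝ => Complex.log (p + (θ:ℂ) * (q - p)))
        ((q - p) / (p + (θ:ℂ) * (q - p))) θ := by
    intro θ hθ
    rw [Set.uIcc_of_le (by norm_num)] at hθ
    have hre := seg_re_pos hp hq hθ.1 hθ.2
    have hlog := Complex.hasDerivAt_log (Or.inl hre : _ ∈ Complex.slitPlane)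
    have := hlog.comp θ (hasDerivAt_affine p q θ)
    simpa [div_eq_inv_mul, Function.comp_def] using this
  have hcont : ContinuousOn (fun θ : ℝ => (q - p) / (p + (θ:ℂ) * (q - p))) (Set.uIcc (0:ℝ) 1) := by
    apply ContinuousOn.div continuousOn_const
    · fun_prop
    · intro θ hθ
      rw [Set.uIcc_of_le (by norm_num)] at hθ
      have hre := seg_re_pos hp hq hθ.1 hθ.2
      intro h; rw [h] at hre; simp at hre
  have := intervalIntegral.integral_eq_sub_of_hasDerivAt key
    (hcont.intervalIntegrable)
  simpa using this

-- pointwise: (e^{-pk} - e^{-qk})/k = ∫_{θ∈(0,1]} (q-p) e^{-(p+θ(q-p))k}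
lemma exp_diff_integral (p q : ℂ) {k : ℝ} (hk : 0 < k) :
    ∫ θ in Ioc (0:ℝ) 1, (q - p) * Complex.exp (-((p + (θ:ℂ) * (q - p)) * k))
      = (Complex.exp (-(p * k)) - Complex.exp (-(q * k))) / k := by
  have key : ∀ θ ∈ Set.uIcc (0:ℝ) 1,
      HasDerivAt (fun θ : ℝ => (-(k:ℂ))⁻¹ * Complex.exp (-((p + (θ:ℂ) * (q - p)) * k)))
        ((q - p) * Complex.exp (-((p + (θ:ℂ) * (q - p)) * k))) θ := by
    intro θ _
    have h1 : HasDerivAt (fun θ : ℝ => (θ:ℂ)) 1 θ := Complex.ofRealCLM.hasDerivAt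
    have h2 : HasDerivAt (fun θ : ℝ => -((p + (θ:ℂ) * (q - p)) * k)) (-((q - p) * k)) θ := by
      have := ((h1.mul_const (q - p)).const_add p).mul_const (k:ℂ)
      simpa using this.fun_neg
    have h3 := (Complex.hasDerivAt_exp _).comp θ h2
    have h4 := h3.const_mul ((-(k:ℂ))⁻¹)
    have hkne : (k:ℂ) ≠ 0 := by exact_mod_cast hk.ne'
    refine h4.congr_deriv ?_
    field_simp
  have hcont : ContinuousOn
      (fun θ : ℝ => (q - p) * Complex.exp (-((p + (θ:ℂ) * (q - p)) * k)))
      (Set.uIcc (0:ℝ) 1) := by fun_prop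
  have := intervalIntegral.integral_eq_sub_of_hasDerivAt key hcont.intervalIntegrable
  rw [intervalIntegral.integral_of_le (by norm_num : (0:ℝ) ≤ 1)] at this
  rw [this]
  have hkne : (k:ℂ) ≠ 0 := by exact_mod_cast hk.ne'
  have e1 : (p + ((1:ℝ):ℂ) * (q - p)) = q := by push_cast; ring
  have e2 : (p + ((0:ℝ):ℂ) * (q - p)) = p := by push_cast; ring
  rw [e1, e2, eq_div_iff hkne]
  have hnk : (-(k:ℂ)) ≠ 0 := neg_ne_zero.mpr hkne
  field_simp
  ring

-- ∫_{Ioi 0} e^{-(s k)} dk = 1/s for Re s > 0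
lemma integral_exp_neg_complex {s : ℂ} (hs : 0 < s.re) :
    IntegrableOn (fun k : ℝ => Complex.exp (-(s * k))) (Ioi 0) ∧
    ∫ k in Ioi (0:ℝ), Complex.exp (-(s * k)) = 1 / s := by
  have hint : IntegrableOn (fun k : ℝ => Complex.exp (-(s * k))) (Ioi 0) := by
    apply ((exp_neg_integrableOn_Ioi 0 hs).congr' ?_ ?_).mono_measure (le_refl _)
    · exact (Complex.continuous_exp.comp (by fun_prop)).aestronglyMeasurable
    · filter_upwards [ae_restrict_mem measurableSet_Ioi] with k _
      simp [Complex.norm_exp, mul_comm]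
  refine ⟨hint, ?_⟩
  have hsne : s ≠ 0 := fun h => by simp [h] at hs
  have := integral_Ioi_of_hasDerivAt_of_tendsto
    (f := fun k : ℝ => (-s)⁻¹ * Complex.exp (-(s * k)))
    (f' := fun k : ℝ => Complex.exp (-(s * k))) (a := 0) (m := 0)
    ?_ ?_ hint ?_
  · rw [this]; simp
  · exact (Continuous.continuousWithinAt (by fun_prop))
  · intro k _
    have h1 : HasDerivAt (fun k : ℝ => (k:ℂ)) 1 k := Complex.ofRealCLM.hasDerivAt
    have h2 : HasDerivAt (fun k : ℝ => -(s * k)) (-s) k := by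
      simpa using (h1.const_mul s).fun_neg
    have h3 := (Complex.hasDerivAt_exp _).comp k h2
    have h4 := h3.const_mul ((-s)⁻¹)
    refine h4.congr_deriv ?_
    field_simp
  · rw [show (0:ℂ) = (-s)⁻¹ * 0 by ring]
    apply Filter.Tendsto.const_mul
    rw [tendsto_zero_iff_norm_tendsto_zero]
    have : (fun k : ℝ => ‖Complex.exp (-(s * k))‖) = fun k : ℝ => Real.exp (-(s.re * k)) := by
      funext k; simp [Complex.norm_exp]
    rw [this]
    apply Real.tendsto_exp_atBot.comp
    have h5 : Filter.Tendsto (fun k : ℝ => s.re * k) Filter.atTop Filter.atTop :=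
      Filter.Tendsto.const_mul_atTop hs Filter.tendsto_id
    exact Filter.tendsto_neg_atTop_atBot.comp h5

lemma frullani {p q : ℂ} (hp : 0 < p.re) (hq : 0 < q.re) :
    IntegrableOn (fun k : ℝ => (Complex.exp (-(p * k)) - Complex.exp (-(q * k))) / k) (Ioi 0) ∧
    ∫ k in Ioi (0:ℝ), (Complex.exp (-(p * k)) - Complex.exp (-(q * k))) / k
      = Complex.log q - Complex.log p := by
  set μ := volume.restrict (Ioi (0:ℝ)) with hμ
  set ν := volume.restrict (Ioc (0:ℝ) 1) with hν
  set m := min p.re q.re with hm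
  have hm0 : 0 < m := lt_min hp hq
  set F : ℝ → ℝ → ℂ := fun k θ => (q - p) * Complex.exp (-((p + (θ:ℂ) * (q - p)) * k)) with hF
  have hFmeas : AEStronglyMeasurable (Function.uncurry F) (μ.prod ν) := by
    apply Continuous.aestronglyMeasurable
    apply continuous_const.mul
    apply Complex.continuous_exp.comp
    fun_prop
  have hdom : Integrable (fun z : ℝ × ℝ => ‖q - p‖ * Real.exp (-m * z.1)) (μ.prod ν) := by
    have h1 : Integrable (fun k : ℝ => ‖q - p‖ * Real.exp (-m * k)) μ := by
      rw [hμ]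
      exact (exp_neg_integrableOn_Ioi 0 hm0).const_mul _
    have h2 : Integrable (fun _ : ℝ => (1:ℝ)) ν := by
      apply integrable_const
    have := h1.mul_prod h2
    simpa using this
  have hae : ∀ᵐ z ∂(μ.prod ν), z.1 ∈ Ioi (0:ℝ) ∧ z.2 ∈ Ioc (0:ℝ) 1 := by
    rw [hμ, hν, Measure.prod_restrict]
    filter_upwards [ae_restrict_mem ((measurableSet_Ioi).prod (measurableSet_Ioc))] with z hz
    exact hz
  have hFint : Integrable (Function.uncurry F) (μ.prod ν) := by
    refine ⟨hFmeas, ?_⟩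
    apply HasFiniteIntegral.mono' hdom.hasFiniteIntegral
    filter_upwards [hae] with z hz
    rcases hz with ⟨hk, hθ⟩
    have hre : m ≤ (p + (z.2:ℂ) * (q - p)).re := by
      simp only [Complex.add_re, Complex.mul_re, Complex.ofReal_re, Complex.ofReal_im,
        Complex.sub_re, Complex.sub_im, zero_mul, sub_zero, hm]
      rcases le_total p.re q.re with h | h
      · simp only [min_eq_left h]; nlinarith [hθ.1.le, mul_nonneg hθ.1.le (sub_nonneg.mpr h)]
      · simp only [min_eq_right h]; nlinarith [hθ.2, mul_nonneg (sub_nonneg.mpr hθ.2) (sub_nonneg.mpr h)]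
    calc ‖Function.uncurry F z‖
        = ‖q - p‖ * Real.exp (-((p + (z.2:ℂ) * (q - p)).re * z.1)) := by
          simp only [Function.uncurry, hF, norm_mul, Complex.norm_exp,
            Complex.neg_re, Complex.mul_re, Complex.ofReal_re, Complex.ofReal_im, mul_zero,
            sub_zero]
      _ ≤ ‖q - p‖ * Real.exp (-m * z.1) := by
          have hle : -((p + (z.2:ℂ) * (q - p)).re * z.1) ≤ -m * z.1 := by
            rw [neg_mul]; exact neg_le_neg (mul_le_mul_of_nonneg_right hre hk.le)
          exact mul_le_mul_of_nonneg_left (Real.exp_le_exp.mpr hle) (norm_nonneg _)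
  have hswap := integral_integral_swap hFint
  -- inner over θ equals the Frullani integrand
  have hinner : ∀ k ∈ Ioi (0:ℝ),
      (∫ θ, F k θ ∂ν) = (Complex.exp (-(p * k)) - Complex.exp (-(q * k))) / k := by
    intro k hk
    exact exp_diff_integral p q hk
  have hintK : IntegrableOn
      (fun k : ℝ => (Complex.exp (-(p * k)) - Complex.exp (-(q * k))) / k) (Ioi 0) := by
    have h := hFint.integral_prod_left
    apply h.congr
    filter_upwards [ae_restrict_mem measurableSet_Ioi] with k hk
    exact hinner k hk
  refine ⟨hintK, ?_⟩
  have hL : (∫ k, ∫ θ, F k θ ∂ν ∂μ)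
      = ∫ k in Ioi (0:ℝ), (Complex.exp (-(p * k)) - Complex.exp (-(q * k))) / k := by
    apply integral_congr_ae
    filter_upwards [ae_restrict_mem measurableSet_Ioi] with k hk
    exact hinner k hk
  have hR : (∫ θ, ∫ k, F k θ ∂μ ∂ν) = Complex.log q - Complex.log p := by
    have hθeq : ∀ θ ∈ Ioc (0:ℝ) 1,
        (∫ k, F k θ ∂μ) = (q - p) / (p + (θ:ℂ) * (q - p)) := by
      intro θ hθ
      have hre := seg_re_pos hp hq hθ.1.le hθ.2
      have := (integral_exp_neg_complex hre).2
      calc (∫ k, F k θ ∂μ) = (q - p) * ∫ k in Ioi (0:ℝ),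
            Complex.exp (-((p + (θ:ℂ) * (q - p)) * k)) := by
            rw [hμ]; exact integral_const_mul _ _
        _ = (q - p) * (1 / (p + (θ:ℂ) * (q - p))) := by rw [this]
        _ = (q - p) / (p + (θ:ℂ) * (q - p)) := by ring
    calc (∫ θ, ∫ k, F k θ ∂μ ∂ν)
        = ∫ θ in Ioc (0:ℝ) 1, (q - p) / (p + (θ:ℂ) * (q - p)) := by
          apply integral_congr_ae
          filter_upwards [ae_restrict_mem measurableSet_Ioc] with θ hθ
          exact hθeq θ hθ
      _ = ∫ θ in (0:ℝ)..1, (q - p) / (p + (θ:ℂ) * (q - p)) := by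
          rw [intervalIntegral.integral_of_le (by norm_num : (0:ℝ) ≤ 1)]
      _ = Complex.log q - Complex.log p := seg_log_integral hp hq
  rw [← hL, hswap, hR]

def Kker (a b u v k : ℝ) : ℂ :=
  ((1/|k| : ℝ) : ℂ) * (((Real.exp (-(|k| * a)) : ℝ) : ℂ) * Complex.exp (Complex.I * k * u)
    - ((Real.exp (-(|k| * b)) : ℝ) : ℂ) * Complex.exp (Complex.I * k * v))

lemma Kker_pos {a b u v k : ℝ} (hk : 0 < k) :
    Kker a b u v k = (Complex.exp (-(((a:ℂ) - u * Complex.I) * k))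
      - Complex.exp (-(((b:ℂ) - v * Complex.I) * k))) / k := by
  unfold Kker
  rw [abs_of_pos hk]
  have e1 : (-((k:ℝ) * a) : ℂ) + Complex.I * k * u = -(((a:ℂ) - u * Complex.I) * k) := by
    push_cast; ring
  have e2 : (-((k:ℝ) * b) : ℂ) + Complex.I * k * v = -(((b:ℂ) - v * Complex.I) * k) := by
    push_cast; ring
  rw [Complex.ofReal_exp, Complex.ofReal_exp, ← Complex.exp_add, ← Complex.exp_add]
  rw [show ((-(k * a) : ℝ) : ℂ) = (-((k:ℝ) * a) : ℂ) by push_cast; ring] at *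
  rw [show ((-(k * b) : ℝ) : ℂ) = (-((k:ℝ) * b) : ℂ) by push_cast; ring] at *
  rw [e1, e2]
  have hkne : (k:ℂ) ≠ 0 := by exact_mod_cast hk.ne'
  push_cast
  field_simp

lemma Kker_neg (a b u v k : ℝ) : Kker a b u v (-k) = Kker a b (-u) (-v) k := by
  unfold Kker
  rw [abs_neg]
  congr 2
  · congr 1; push_cast; ring
  · congr 1; push_cast; ring

lemma log_conj_sum {b : ℝ} (v : ℝ) (hb : 0 < b) :
    Complex.log ((b:ℂ) + v * Complex.I) + Complex.log ((b:ℂ) - v * Complex.I)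
      = ((Real.log (b^2 + v^2) : ℝ) : ℂ) := by
  set z : ℂ := (b:ℂ) + v * Complex.I with hz
  have hre : z.re = b := by simp [hz]
  have him : z.im = v := by simp [hz]
  have harg : z.arg ≠ π := by
    rw [Ne, Complex.arg_eq_pi_iff, hre]
    rintro ⟨h1, -⟩; linarith
  have hconj : (starRingEnd ℂ) z = (b:ℂ) - v * Complex.I := by
    rw [hz, map_add, map_mul, Complex.conj_ofReal, Complex.conj_ofReal, Complex.conj_I]; ring
  have habs : ‖z‖^2 = b^2 + v^2 := by
    rw [Complex.sq_norm, Complex.normSq_apply, hre, him]; ring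
  rw [← hconj, Complex.log_conj _ harg, Complex.add_conj, Complex.log_re]
  rw [Complex.ofReal_inj, ← habs, Real.log_pow]
  push_cast; ring

lemma Kker_integrable_eval {a b : ℝ} (u v : ℝ) (ha : 0 < a) (hb : 0 < b) :
    Integrable (Kker a b u v) ∧
    ∫ k, Kker a b u v k = ((Real.log (b^2 + v^2) - Real.log (a^2 + u^2) : ℝ) : ℂ) := by
  have key : ∀ u' v' : ℝ,
      IntegrableOn (Kker a b u' v') (Ioi 0) ∧
      ∫ k in Ioi (0:ℝ), Kker a b u' v' k
        = Complex.log ((b:ℂ) - v' * Complex.I) - Complex.log ((a:ℂ) - u' * Complex.I) := by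
    intro u' v'
    have hpre : 0 < ((a:ℂ) - u' * Complex.I).re := by simpa using ha
    have hqre : 0 < ((b:ℂ) - v' * Complex.I).re := by simpa using hb
    have hfr := frullani hpre hqre
    constructor
    · apply hfr.1.congr
      filter_upwards [ae_restrict_mem measurableSet_Ioi] with k hk
      exact (Kker_pos hk).symm
    · rw [setIntegral_congr_fun measurableSet_Ioi (fun k hk => Kker_pos hk)]
      exact hfr.2
  have hIoi := (key u v).1
  have hIic : IntegrableOn (Kker a b u v) (Iic 0) := by
    have A : MeasurableEmbedding (fun x : ℝ => -x) :=
      (Homeomorph.neg ℝ).isClosedEmbedding.measurableEmbedding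
    have hmap : Measure.map (fun x : ℝ => -x) (volume.restrict (Ici (0:ℝ)))
        = volume.restrict (Iic 0) := by
      rw [show (Ici (0:ℝ)) = (fun x : ℝ => -x) ⁻¹' (Iic 0) by ext t; simp,
        ← Measure.restrict_map A.measurable measurableSet_Iic, Measure.map_neg_eq_self]
    rw [IntegrableOn, ← hmap, A.integrable_map_iff]
    have : (Kker a b u v) ∘ (fun x : ℝ => -x) = Kker a b (-u) (-v) := by
      funext k; exact Kker_neg a b u v k
    rw [this]
    exact (integrableOn_Ici_iff_integrableOn_Ioi enorm_ne_top).mpr (key (-u) (-v)).1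
  have hint : Integrable (Kker a b u v) := by
    rw [← integrableOn_univ, ← Set.Iic_union_Ioi (a := (0:ℝ))]
    exact hIic.union hIoi
  refine ⟨hint, ?_⟩
  rw [← intervalIntegral.integral_Iic_add_Ioi hIic hIoi]
  have hneg : ∫ k in Iic (0:ℝ), Kker a b u v k
      = ∫ k in Ioi (0:ℝ), Kker a b (-u) (-v) k := by
    rw [show (Ioi (0:ℝ)) = Ioi (-(0:ℝ)) by norm_num,
      ← integral_comp_neg_Iic (0:ℝ) (Kker a b (-u) (-v))]
    apply integral_congr_ae
    filter_upwards with k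
    have := Kker_neg a b (-u) (-v) k
    simp only [neg_neg] at this
    exact this.symm
  rw [hneg, (key (-u) (-v)).2, (key u v).2]
  push_cast
  rw [← log_conj_sum v hb, ← log_conj_sum u ha]
  push_cast
  ring

lemma exp_neg_lip {x y : ℝ} (hx : 0 ≤ x) (hy : 0 ≤ y) :
    |Real.exp (-x) - Real.exp (-y)| ≤ |x - y| := by
  have main : ∀ x y : ℝ, 0 ≤ x → 0 ≤ y → y ≤ x → Real.exp (-y) - Real.exp (-x) ≤ x - y := by
    intro x y hx hy h
    have h1 : Real.exp (-x) = Real.exp (-y) * Real.exp (y - x) := by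
      rw [← Real.exp_add]; ring_nf
    have h2 := Real.add_one_le_exp (y - x)
    have h3 : Real.exp (-y) ≤ 1 := by
      rw [show (1:ℝ) = Real.exp 0 by simp]
      exact Real.exp_le_exp.mpr (by linarith)
    have h4 := Real.exp_pos (-y)
    nlinarith
  rcases le_total x y with h | h
  · have hee : Real.exp (-y) ≤ Real.exp (-x) := Real.exp_le_exp.mpr (neg_le_neg h)
    rw [abs_of_nonneg (by linarith : (0:ℝ) ≤ Real.exp (-x) - Real.exp (-y)),
      abs_of_nonpos (by linarith : x - y ≤ 0)]
    have := main y x hy hx h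
    linarith
  · have hee : Real.exp (-x) ≤ Real.exp (-y) := Real.exp_le_exp.mpr (neg_le_neg h)
    rw [abs_of_nonpos (by linarith : Real.exp (-x) - Real.exp (-y) ≤ 0),
      abs_of_nonneg (by linarith : (0:ℝ) ≤ x - y)]
    have := main x y hx hy h
    linarith

lemma norm_exp_I_sub (s t : ℝ) :
    ‖Complex.exp (Complex.I * s) - Complex.exp (Complex.I * t)‖ ≤ |s - t| := by
  have key : ∀ θ ∈ Set.uIcc t s,
      HasDerivAt (fun θ : ℝ => Complex.exp (Complex.I * θ))
        (Complex.I * Complex.exp (Complex.I * θ)) θ := by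
    intro θ _
    have h1 : HasDerivAt (fun θ : ℝ => (θ:ℂ)) 1 θ := Complex.ofRealCLM.hasDerivAt
    have h2 : HasDerivAt (fun θ : ℝ => Complex.I * (θ:ℂ)) Complex.I θ := by
      simpa using h1.const_mul Complex.I
    have h3 := (Complex.hasDerivAt_exp _).comp θ h2
    simpa [mul_comm, Function.comp_def] using h3
  have hcont : ContinuousOn (fun θ : ℝ => Complex.I * Complex.exp (Complex.I * θ))
      (Set.uIcc t s) := by fun_prop
  have hftc := intervalIntegral.integral_eq_sub_of_hasDerivAt key hcont.intervalIntegrable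
  have hbd : ‖∫ θ in t..s, Complex.I * Complex.exp (Complex.I * θ)‖ ≤ 1 * |s - t| := by
    apply intervalIntegral.norm_integral_le_of_norm_le_const
    intro θ _
    rw [norm_mul, Complex.norm_I, one_mul,
      Complex.norm_exp]
    simp [Complex.mul_re]
  rw [hftc] at hbd
  simpa using hbd

lemma Kker_bound {a b : ℝ} (u v : ℝ) (ha : 0 < a) (hb : 0 < b) (k : ℝ) :
    ‖Kker a b u v k‖ ≤ (|a - b| + |u - v| + 2) * Real.exp (min a b)
      * Real.exp (-(min a b) * |k|) := by
  set m := min a b with hm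
  have hm0 : 0 < m := lt_min ha hb
  rcases eq_or_ne k 0 with rfl | hk
  · simp [Kker]
    positivity
  have hk0 : 0 < |k| := abs_pos.mpr hk
  have hnorm : ‖Kker a b u v k‖ = (1/|k|) *
      ‖((Real.exp (-(|k| * a)) : ℝ) : ℂ) * Complex.exp (Complex.I * k * u)
        - ((Real.exp (-(|k| * b)) : ℝ) : ℂ) * Complex.exp (Complex.I * k * v)‖ := by
    rw [Kker, norm_mul]
    congr 1
    rw [Complex.norm_real]
    simp [abs_of_pos, one_div, abs_of_pos hk0]
  have habs_exp : ∀ s : ℝ, ‖Complex.exp (Complex.I * (k:ℂ) * (s:ℂ))‖ = 1 := by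
    intro s
    rw [Complex.norm_exp]
    simp [Complex.mul_re, Complex.mul_im]
  rcases le_total |k| 1 with hk1 | hk1
  · -- small k : bound by |a-b| + |u-v|
    have hbd : ‖((Real.exp (-(|k| * a)) : ℝ) : ℂ) * Complex.exp (Complex.I * k * u)
        - ((Real.exp (-(|k| * b)) : ℝ) : ℂ) * Complex.exp (Complex.I * k * v)‖
        ≤ |k| * (|a - b| + |u - v|) := by
      have step : ((Real.exp (-(|k| * a)) : ℝ) : ℂ) * Complex.exp (Complex.I * k * u)
          - ((Real.exp (-(|k| * b)) : ℝ) : ℂ) * Complex.exp (Complex.I * k * v)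
          = (((Real.exp (-(|k| * a)) : ℝ) : ℂ) - ((Real.exp (-(|k| * b)) : ℝ) : ℂ))
              * Complex.exp (Complex.I * k * u)
            + ((Real.exp (-(|k| * b)) : ℝ) : ℂ)
              * (Complex.exp (Complex.I * k * u) - Complex.exp (Complex.I * k * v)) := by
        ring
      rw [step]
      apply le_trans (norm_add_le _ _)
      have t1 : ‖(((Real.exp (-(|k| * a)) : ℝ) : ℂ) - ((Real.exp (-(|k| * b)) : ℝ) : ℂ))
          * Complex.exp (Complex.I * k * u)‖ ≤ |k| * |a - b| := by
        rw [norm_mul, habs_exp u, mul_one, ← Complex.ofReal_sub, Complex.norm_real,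
          Real.norm_eq_abs]
        have := exp_neg_lip (mul_nonneg hk0.le ha.le) (mul_nonneg hk0.le hb.le)
        calc |Real.exp (-(|k| * a)) - Real.exp (-(|k| * b))| ≤ |(|k| * a) - (|k| * b)| := this
          _ = |k| * |a - b| := by rw [← mul_sub, abs_mul, abs_abs]
      have t2 : ‖((Real.exp (-(|k| * b)) : ℝ) : ℂ)
          * (Complex.exp (Complex.I * k * u) - Complex.exp (Complex.I * k * v))‖
          ≤ |k| * |u - v| := by
        rw [norm_mul, Complex.norm_real, Real.norm_eq_abs, abs_of_pos (Real.exp_pos _)]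
        have h1 : Complex.I * (k:ℂ) * (u:ℂ) = Complex.I * ((k * u : ℝ) : ℂ) := by
          push_cast; ring
        have h2 : Complex.I * (k:ℂ) * (v:ℂ) = Complex.I * ((k * v : ℝ) : ℂ) := by
          push_cast; ring
        rw [h1, h2]
        calc Real.exp (-(|k| * b)) * ‖Complex.exp (Complex.I * ((k * u : ℝ):ℂ))
              - Complex.exp (Complex.I * ((k * v : ℝ):ℂ))‖
            ≤ 1 * |k * u - k * v| := by
              apply mul_le_mul _ (norm_exp_I_sub _ _) (norm_nonneg _) zero_le_one
              rw [show (1:ℝ) = Real.exp 0 by simp]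
              exact Real.exp_le_exp.mpr (by nlinarith)
          _ = |k| * |u - v| := by rw [one_mul, ← mul_sub, abs_mul]
      linarith
    rw [hnorm]
    calc (1/|k|) * ‖_ - _‖ ≤ (1/|k|) * (|k| * (|a - b| + |u - v|)) := by
          apply mul_le_mul_of_nonneg_left hbd (by positivity)
      _ = |a - b| + |u - v| := by field_simp
      _ ≤ (|a - b| + |u - v| + 2) * Real.exp m * Real.exp (-m * |k|) := by
          have h1 : (1:ℝ) ≤ Real.exp m * Real.exp (-m * |k|) := by
            rw [← Real.exp_add, show (1:ℝ) = Real.exp 0 by simp]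
            apply Real.exp_le_exp.mpr
            nlinarith
          nlinarith [abs_nonneg (a-b), abs_nonneg (u-v),
            mul_nonneg (Real.exp_pos m).le (Real.exp_pos (-m * |k|)).le]
  · -- large k : bound by sum of exponentials
    have hbd : ‖((Real.exp (-(|k| * a)) : ℝ) : ℂ) * Complex.exp (Complex.I * k * u)
        - ((Real.exp (-(|k| * b)) : ℝ) : ℂ) * Complex.exp (Complex.I * k * v)‖
        ≤ 2 * Real.exp (-m * |k|) := by
      apply le_trans (norm_sub_le _ _)
      rw [norm_mul, norm_mul, habs_exp u, habs_exp v, mul_one, mul_one,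
        Complex.norm_real, Complex.norm_real, Real.norm_eq_abs, Real.norm_eq_abs,
        abs_of_pos (Real.exp_pos _), abs_of_pos (Real.exp_pos _)]
      have e1 : Real.exp (-(|k| * a)) ≤ Real.exp (-m * |k|) := by
        apply Real.exp_le_exp.mpr
        have : m ≤ a := min_le_left a b
        nlinarith
      have e2 : Real.exp (-(|k| * b)) ≤ Real.exp (-m * |k|) := by
        apply Real.exp_le_exp.mpr
        have : m ≤ b := min_le_right a b
        nlinarith
      linarith
    rw [hnorm]
    calc (1/|k|) * ‖_ - _‖ ≤ 1 * (2 * Real.exp (-m * |k|)) := by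
          apply mul_le_mul _ hbd (norm_nonneg _) zero_le_one
          rw [div_le_one hk0]; exact hk1
      _ ≤ (|a - b| + |u - v| + 2) * Real.exp m * Real.exp (-m * |k|) := by
          have h1 : (1:ℝ) ≤ Real.exp m := by
            rw [show (1:ℝ) = Real.exp 0 by simp]; exact Real.exp_le_exp.mpr hm0.le
          have h2 : (2:ℝ) ≤ (|a - b| + |u - v| + 2) * Real.exp m := by
            nlinarith [mul_nonneg (add_nonneg (abs_nonneg (a-b)) (abs_nonneg (u-v)))
              (Real.exp_pos m).le]
          have := mul_le_mul_of_nonneg_right h2 (Real.exp_pos (-m * |k|)).le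
          linarith

lemma integrable_exp_neg_abs {m : ℝ} (hm : 0 < m) :
    Integrable (fun k : ℝ => Real.exp (-m * |k|)) := by
  have hIoi : IntegrableOn (fun k : ℝ => Real.exp (-m * |k|)) (Ioi 0) := by
    apply (exp_neg_integrableOn_Ioi 0 hm).congr_fun ?_ measurableSet_Ioi
    intro k hk
    simp [abs_of_pos (mem_Ioi.mp hk)]
  have hIic : IntegrableOn (fun k : ℝ => Real.exp (-m * |k|)) (Iic 0) := by
    have A : MeasurableEmbedding (fun x : ℝ => -x) :=
      (Homeomorph.neg ℝ).isClosedEmbedding.measurableEmbedding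
    have hmap : Measure.map (fun x : ℝ => -x) (volume.restrict (Ici (0:ℝ)))
        = volume.restrict (Iic 0) := by
      rw [show (Ici (0:ℝ)) = (fun x : ℝ => -x) ⁻¹' (Iic 0) by ext t; simp,
        ← Measure.restrict_map A.measurable measurableSet_Iic, Measure.map_neg_eq_self]
    rw [IntegrableOn, ← hmap, A.integrable_map_iff]
    have : (fun k : ℝ => Real.exp (-m * |k|)) ∘ (fun x : ℝ => -x)
        = fun k : ℝ => Real.exp (-m * |k|) := by
      funext k; simp
    rw [this]
    exact (integrableOn_Ici_iff_integrableOn_Ioi enorm_ne_top).mpr hIoi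
  rw [← integrableOn_univ, ← Set.Iic_union_Ioi (a := (0:ℝ))]
  exact hIic.union hIoi

lemma Kker_factor (a b u v k : ℝ) :
    Kker a b (u + v) v k = Kker a b u 0 k * Complex.exp (Complex.I * k * v) := by
  unfold Kker
  have e1 : Complex.exp (Complex.I * k * ((u + v : ℝ):ℂ))
      = Complex.exp (Complex.I * k * (u:ℂ)) * Complex.exp (Complex.I * k * (v:ℂ)) := by
    rw [← Complex.exp_add]; congr 1; push_cast; ring
  have e2 : Complex.exp (Complex.I * k * ((0:ℝ):ℂ)) = 1 := by
    norm_num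
  rw [e1, e2]
  ring

lemma fubini_density {a b : ℝ} (ha : 0 < a) (hb : 0 < b) (y : ℝ) (f : ℝ → ℂ)
    (hf : Integrable f) :
    Integrable (fun t : ℝ =>
      ((Real.log (a^2 + (y - t)^2) - Real.log (b^2 + t^2) : ℝ) : ℂ) * f t) ∧
    Integrable (fun k : ℝ => Kker a b y 0 k * fourierHat f k) ∧
    ∫ t : ℝ, ((Real.log (a^2 + (y - t)^2) - Real.log (b^2 + t^2) : ℝ) : ℂ) * f t
      = -∫ k : ℝ, Kker a b y 0 k * fourierHat f k := by
  set m := min a b with hm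
  have hm0 : 0 < m := lt_min ha hb
  set F : ℝ → ℝ → ℂ := fun t k => Kker a b (y - t) (-t) k * f t with hFdef
  -- measurability of the uncurried kernel
  have hmeas : AEStronglyMeasurable (Function.uncurry F) (volume.prod volume) := by
    have h1 : Measurable fun z : ℝ × ℝ => ((1/|z.2| : ℝ) : ℂ) :=
      Complex.measurable_ofReal.comp (measurable_const.div measurable_snd.abs)
    have h2 : Continuous fun z : ℝ × ℝ =>
        (((Real.exp (-(|z.2| * a)) : ℝ) : ℂ) * Complex.exp (Complex.I * z.2 * (y - z.1))
          - ((Real.exp (-(|z.2| * b)) : ℝ) : ℂ) * Complex.exp (Complex.I * z.2 * (-z.1))) := by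
      fun_prop
    have h3 : AEStronglyMeasurable (fun z : ℝ × ℝ => f z.1) (volume.prod volume) :=
      hf.1.comp_fst
    have h4 := ((h1.aestronglyMeasurable.mul h2.aestronglyMeasurable).mul h3)
    apply h4.congr
    filter_upwards with z
    simp only [Function.uncurry, hFdef, Kker, Pi.mul_apply]
    push_cast
    ring_nf
  -- integrability of the uncurried kernel via domination
  have hFint : Integrable (Function.uncurry F) (volume.prod volume) := by
    have hdom : Integrable
        (fun z : ℝ × ℝ => ((|a - b| + |y| + 2) * Real.exp m * Real.exp (-m * |z.2|))
          * ‖f z.1‖) (volume.prod volume) := by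
      have h5 : Integrable (fun k : ℝ =>
          (|a - b| + |y| + 2) * Real.exp m * Real.exp (-m * |k|)) :=
        (integrable_exp_neg_abs hm0).const_mul _
      have := hf.norm.mul_prod h5
      apply this.congr
      filter_upwards with z
      ring
    apply Integrable.mono' hdom hmeas
    filter_upwards with z
    have hb1 := Kker_bound (y - z.1) (-z.1) ha hb z.2
    have he : |(y - z.1) - (-z.1)| = |y| := by congr 1; ring
    rw [he, ← hm] at hb1
    calc ‖Function.uncurry F z‖ = ‖Kker a b (y - z.1) (-z.1) z.2‖ * ‖f z.1‖ := norm_mul _ _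
      _ ≤ ((|a - b| + |y| + 2) * Real.exp m * Real.exp (-m * |z.2|)) * ‖f z.1‖ := by
          apply mul_le_mul_of_nonneg_right _ (norm_nonneg _)
          exact hb1
  -- inner integral over k : pointwise log formula
  have hlog : ∀ t : ℝ,
      ((Real.log (a^2 + (y - t)^2) - Real.log (b^2 + t^2) : ℝ) : ℂ) * f t
        = -∫ k : ℝ, F t k := by
    intro t
    have hev := (Kker_integrable_eval (y - t) (-t) ha hb).2
    have h6 : ∫ k : ℝ, F t k = (∫ k : ℝ, Kker a b (y - t) (-t) k) * f t := by
      simp only [hFdef]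
      exact integral_mul_const (f t) _
    rw [h6, hev]
    rw [show ((-t)^2 : ℝ) = t^2 by ring]
    push_cast
    ring
  -- inner integral over t : Fourier transform formula
  have hfour : ∀ k : ℝ, ∫ t : ℝ, F t k = Kker a b y 0 k * fourierHat f k := by
    intro k
    have hptw : ∀ t : ℝ, F t k
        = Kker a b y 0 k * (f t * Complex.exp (-(Complex.I * k * t))) := by
      intro t
      simp only [hFdef]
      have hfac := Kker_factor a b y (-t) k
      rw [show y + -t = y - t from by ring] at hfac
      rw [hfac, show Complex.exp (Complex.I * (k:ℂ) * ((-t : ℝ):ℂ))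
        = Complex.exp (-(Complex.I * k * t)) from by congr 1; push_cast; ring]
      ring
    calc ∫ t : ℝ, F t k
        = ∫ t : ℝ, Kker a b y 0 k * (f t * Complex.exp (-(Complex.I * k * t))) :=
          integral_congr_ae (Filter.Eventually.of_forall hptw)
      _ = Kker a b y 0 k * fourierHat f k := integral_const_mul _ _
  -- assemble
  have hint1 : Integrable (fun t : ℝ =>
      ((Real.log (a^2 + (y - t)^2) - Real.log (b^2 + t^2) : ℝ) : ℂ) * f t) := by
    have := hFint.integral_prod_left
    apply this.neg.congr
    filter_upwards with t
    exact (hlog t).symm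
  have hint2 : Integrable (fun k : ℝ => Kker a b y 0 k * fourierHat f k) := by
    have := hFint.swap.integral_prod_left
    apply this.congr
    filter_upwards with k
    exact hfour k
  refine ⟨hint1, hint2, ?_⟩
  calc ∫ t : ℝ, ((Real.log (a^2 + (y - t)^2) - Real.log (b^2 + t^2) : ℝ) : ℂ) * f t
      = ∫ t : ℝ, -∫ k : ℝ, F t k := integral_congr_ae (Filter.Eventually.of_forall hlog)
    _ = -∫ t : ℝ, ∫ k : ℝ, F t k := integral_neg _
    _ = -∫ k : ℝ, ∫ t : ℝ, F t k := by rw [integral_integral_swap hFint]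
    _ = -∫ k : ℝ, Kker a b y 0 k * fourierHat f k := by
        rw [integral_congr_ae (Filter.Eventually.of_forall hfour)]

/-- Fourier representation of the single layer potential of the crescent
domain `Ω = B_R \ closure(B_r)` in strip coordinates: for mean-zero weighted densities
`f_R, f_r ∈ L¹ ∩ L²` and every point `(x,y)` of the strip `(1/(2R), 1/(2r)) × ℝ`, the
boundary-integral expression of `S_{∂Ω}[φ](Ψ(x,y))` equals its frequency-domain
expression, all integrals being absolutely convergent. -/
theorem singleLayer_crescent_fourier_representation
    (R r : ℝ) (hr : 0 < r) (hRr : r < R)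
    (fR fr : ℝ → ℂ)
    (hfR1 : Integrable fR) (hfR2 : MemLp fR 2 (volume : Measure ℝ))
    (hfr1 : Integrable fr) (hfr2 : MemLp fr 2 (volume : Measure ℝ))
    (hmean : (∫ t : ℝ, fR t) + (∫ t : ℝ, fr t) = 0)
    (x y : ℝ) (hx : x ∈ Ioo (1/(2*R)) (1/(2*r))) :
    Integrable (fun t : ℝ =>
      ((Real.log ((x - 1/(2*R))^2 + (y - t)^2) - Real.log ((1/(2*R))^2 + t^2) : ℝ) : ℂ)
        * fR t) ∧
    Integrable (fun t : ℝ =>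
      ((Real.log ((x - 1/(2*r))^2 + (y - t)^2) - Real.log ((1/(2*r))^2 + t^2) : ℝ) : ℂ)
        * fr t) ∧
    Integrable (fun k : ℝ =>
      ((1/|k| : ℝ) : ℂ) *
        (((Real.exp (-(|k| * (x - 1/(2*R)))) : ℝ) : ℂ) * Complex.exp (Complex.I * k * y)
            - ((Real.exp (-(|k| / (2*R))) : ℝ) : ℂ)) * fourierHat fR k
      + ((1/|k| : ℝ) : ℂ) *
        (((Real.exp (-(|k| * (1/(2*r) - x))) : ℝ) : ℂ) * Complex.exp (Complex.I * k * y)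
            - ((Real.exp (-(|k| / (2*r))) : ℝ) : ℂ)) * fourierHat fr k) ∧
    ((1/(4*(π:ℂ))) * ∫ t : ℝ,
        ((Real.log ((x - 1/(2*R))^2 + (y - t)^2) - Real.log ((1/(2*R))^2 + t^2) : ℝ) : ℂ)
          * fR t)
      + ((1/(4*(π:ℂ))) * ∫ t : ℝ,
        ((Real.log ((x - 1/(2*r))^2 + (y - t)^2) - Real.log ((1/(2*r))^2 + t^2) : ℝ) : ℂ)
          * fr t)
      = -(1/(4*(π:ℂ))) * ∫ k : ℝ,
          (((1/|k| : ℝ) : ℂ) *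
            (((Real.exp (-(|k| * (x - 1/(2*R)))) : ℝ) : ℂ) * Complex.exp (Complex.I * k * y)
                - ((Real.exp (-(|k| / (2*R))) : ℝ) : ℂ)) * fourierHat fR k
          + ((1/|k| : ℝ) : ℂ) *
            (((Real.exp (-(|k| * (1/(2*r) - x))) : ℝ) : ℂ) * Complex.exp (Complex.I * k * y)
                - ((Real.exp (-(|k| / (2*r))) : ℝ) : ℂ)) * fourierHat fr k) := by
  have hR0 : (0:ℝ) < R := hr.trans hRr
  have haR : 0 < x - 1/(2*R) := sub_pos.mpr hx.1
  have hbR : (0:ℝ) < 1/(2*R) := by positivity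
  have har : 0 < 1/(2*r) - x := sub_pos.mpr hx.2
  have hbr : (0:ℝ) < 1/(2*r) := by positivity
  have HR := fubini_density haR hbR y fR hfR1
  have Hr := fubini_density har hbr y fr hfr1
  have hsq : ∀ t : ℝ, ((1/(2*r) - x)^2 + (y - t)^2 : ℝ) = (x - 1/(2*r))^2 + (y - t)^2 := by
    intro t; ring
  -- kernel identification lemmas
  have hKR : ∀ k : ℝ, Kker (x - 1/(2*R)) (1/(2*R)) y 0 k * fourierHat fR k
      = ((1/|k| : ℝ) : ℂ) *
        (((Real.exp (-(|k| * (x - 1/(2*R)))) : ℝ) : ℂ) * Complex.exp (Complex.I * k * y)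
            - ((Real.exp (-(|k| / (2*R))) : ℝ) : ℂ)) * fourierHat fR k := by
    intro k
    unfold Kker
    rw [show Complex.exp (Complex.I * (k:ℂ) * ((0:ℝ):ℂ)) = 1 by norm_num, mul_one,
      show (-(|k| * (1/(2*R))) : ℝ) = -(|k| / (2*R)) by ring]
  have hKr : ∀ k : ℝ, Kker (1/(2*r) - x) (1/(2*r)) y 0 k * fourierHat fr k
      = ((1/|k| : ℝ) : ℂ) *
        (((Real.exp (-(|k| * (1/(2*r) - x))) : ℝ) : ℂ) * Complex.exp (Complex.I * k * y)
            - ((Real.exp (-(|k| / (2*r))) : ℝ) : ℂ)) * fourierHat fr k := by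
    intro k
    unfold Kker
    rw [show Complex.exp (Complex.I * (k:ℂ) * ((0:ℝ):ℂ)) = 1 by norm_num, mul_one,
      show (-(|k| * (1/(2*r))) : ℝ) = -(|k| / (2*r)) by ring]
  -- first conjunct
  refine ⟨HR.1, ?_, ?_, ?_⟩
  · apply Hr.1.congr
    filter_upwards with t
    rw [hsq t]
  · apply (HR.2.1.add Hr.2.1).congr
    filter_upwards with k
    show Kker (x - 1/(2*R)) (1/(2*R)) y 0 k * fourierHat fR k
        + Kker (1/(2*r) - x) (1/(2*r)) y 0 k * fourierHat fr k = _
    rw [hKR k, hKr k]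
  · have eq1 : ∫ t : ℝ,
        ((Real.log ((x - 1/(2*r))^2 + (y - t)^2) - Real.log ((1/(2*r))^2 + t^2) : ℝ) : ℂ)
          * fr t
        = ∫ t : ℝ,
        ((Real.log ((1/(2*r) - x)^2 + (y - t)^2) - Real.log ((1/(2*r))^2 + t^2) : ℝ) : ℂ)
          * fr t := by
      apply integral_congr_ae
      filter_upwards with t
      rw [hsq t]
    rw [eq1, HR.2.2, Hr.2.2]
    have eq2 : ∫ k : ℝ,
        (((1/|k| : ℝ) : ℂ) *
          (((Real.exp (-(|k| * (x - 1/(2*R)))) : ℝ) : ℂ) * Complex.exp (Complex.I * k * y)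
              - ((Real.exp (-(|k| / (2*R))) : ℝ) : ℂ)) * fourierHat fR k
        + ((1/|k| : ℝ) : ℂ) *
          (((Real.exp (-(|k| * (1/(2*r) - x))) : ℝ) : ℂ) * Complex.exp (Complex.I * k * y)
              - ((Real.exp (-(|k| / (2*r))) : ℝ) : ℂ)) * fourierHat fr k)
        = (∫ k : ℝ, Kker (x - 1/(2*R)) (1/(2*R)) y 0 k * fourierHat fR k)
          + ∫ k : ℝ, Kker (1/(2*r) - x) (1/(2*r)) y 0 k * fourierHat fr k := by
      rw [← integral_add HR.2.1 Hr.2.1]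
      apply integral_congr_ae
      filter_upwards with k
      rw [hKR k, hKr k]
    rw [eq2]
    ring
end
end

section
/- Let f : ℝ → ℂ be measurable with C₀ := ∫_ℝ |f(k)|²/|k| dk < ∞. Then f is locally integrable and for every Schwartz function ψ : ℝ → ℂ one has |∫_ℝ f(k) ψ(k) dk| ≤ √C₀ · sup_{k ∈ ℝ} (1 + k²)|ψ(k)|. In particular, every such f defines a tempered distribution on ℝ. -/
open MeasureTheory

noncomputable section

open scoped ENNReal NNReal

lemma aux_abs_le (k : ℝ) : |k| ≤ 1 + k ^ 2 := by
  nlinarith [sq_abs k, sq_nonneg (|k| - 1), abs_nonneg k]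

lemma aux_weight_integrable : Integrable (fun k : ℝ => |k| / (1 + k ^ 2) ^ 2) := by
  refine integrable_inv_one_add_sq.mono' ?_ ?_
  · exact (measurable_abs.div ((measurable_const.add (measurable_id.pow_const 2)).pow_const 2)).aestronglyMeasurable
  · refine Filter.Eventually.of_forall fun k => ?_
    have h1 : (0:ℝ) < 1 + k ^ 2 := by positivity
    rw [Real.norm_eq_abs, abs_of_nonneg (by positivity)]
    calc |k| / (1 + k ^ 2) ^ 2 ≤ (1 + k ^ 2) / (1 + k ^ 2) ^ 2 := by
          gcongr; exact aux_abs_le k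
      _ = (1 + k ^ 2)⁻¹ := by field_simp [pow_two]

lemma aux_Ioi : ∫ t in Set.Ioi (0:ℝ), t / (1 + t ^ 2) ^ 2 = 1 / 2 := by
  have hderiv : ∀ t ∈ Set.Ici (0:ℝ), HasDerivAt (fun t : ℝ => -(2 * (1 + t ^ 2))⁻¹)
      (t / (1 + t ^ 2) ^ 2) t := by
    intro t _
    have h1 : (0:ℝ) < 1 + t ^ 2 := by positivity
    have h : HasDerivAt (fun t : ℝ => 2 * (1 + t ^ 2)) (2 * (2 * t)) t := by
      simpa using (((hasDerivAt_pow 2 t).const_add 1).const_mul 2)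
    have := (h.inv (by positivity)).neg
    refine this.congr_deriv ?_
    rw [neg_div, neg_neg, div_eq_div_iff (by positivity) (by positivity)]
    ring
  have hint : IntegrableOn (fun t : ℝ => t / (1 + t ^ 2) ^ 2) (Set.Ioi 0) := by
    refine (aux_weight_integrable.integrableOn (s := Set.Ioi 0)).congr_fun ?_ measurableSet_Ioi
    intro t ht
    show |t| / (1 + t ^ 2) ^ 2 = t / (1 + t ^ 2) ^ 2
    rw [abs_of_pos ht]
  have htend : Filter.Tendsto (fun t : ℝ => -(2 * (1 + t ^ 2))⁻¹) Filter.atTop (nhds 0) := by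
    have h0 : Filter.Tendsto (fun t : ℝ => t ^ 2) Filter.atTop Filter.atTop :=
      Filter.tendsto_pow_atTop two_ne_zero
    have h1 : Filter.Tendsto (fun t : ℝ => 1 + t ^ 2) Filter.atTop Filter.atTop :=
      Filter.tendsto_atTop_add_const_left _ 1 h0
    have h2 : Filter.Tendsto (fun t : ℝ => 2 * (1 + t ^ 2)) Filter.atTop Filter.atTop :=
      h1.const_mul_atTop two_pos
    have h3 : Filter.Tendsto (fun t : ℝ => (2 * (1 + t ^ 2))⁻¹) Filter.atTop (nhds 0) :=
      h2.inv_tendsto_atTop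
    simpa using h3.neg
  have := integral_Ioi_of_hasDerivAt_of_tendsto' hderiv hint htend
  rw [this]; norm_num

lemma aux_weight_int : ∫ k : ℝ, |k| / (1 + k ^ 2) ^ 2 = 1 := by
  have h2 := integral_comp_abs (f := fun t : ℝ => t / (1 + t ^ 2) ^ 2)
  simp only [sq_abs] at h2
  rw [h2, aux_Ioi]; norm_num

lemma aux_cs (f : ℝ → ℂ) (hmeas : Measurable f) (μ : Measure ℝ)
    (h0 : ∀ᵐ k ∂μ, k ≠ (0:ℝ)) (g : ℝ → ℝ≥0∞) (hg : Measurable g) :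
    ∫⁻ k, ENNReal.ofReal ‖f k‖ * g k ∂μ ≤
      (∫⁻ k, ENNReal.ofReal (‖f k‖ ^ 2 / |k|) ∂μ) ^ (1/2 : ℝ) *
      (∫⁻ k, ENNReal.ofReal |k| * g k ^ (2:ℝ) ∂μ) ^ (1/2 : ℝ) := by
  set A : ℝ → ℝ≥0∞ := fun k => ENNReal.ofReal (‖f k‖ ^ 2 / |k|) with hA
  set B : ℝ → ℝ≥0∞ := fun k => ENNReal.ofReal |k| with hB
  have hAmeas : Measurable A :=
    ENNReal.measurable_ofReal.comp ((hmeas.norm.pow_const 2).div measurable_abs)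
  have hBmeas : Measurable B := ENNReal.measurable_ofReal.comp measurable_abs
  have key : ∀ᵐ k ∂μ, ENNReal.ofReal ‖f k‖ * g k
      = (fun k => A k ^ (1/2:ℝ)) k * (fun k => (B k * g k ^ (2:ℝ)) ^ (1/2:ℝ)) k := by
    filter_upwards [h0] with k hk
    have habs : (0:ℝ) < |k| := abs_pos.mpr hk
    have h1 : (B k * g k ^ (2:ℝ)) ^ (1/2:ℝ) = B k ^ (1/2:ℝ) * g k := by
      rw [ENNReal.mul_rpow_of_nonneg _ _ (by norm_num), ← ENNReal.rpow_mul]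
      norm_num
    simp only [h1, ← mul_assoc]
    congr 1
    show ENNReal.ofReal ‖f k‖
        = ENNReal.ofReal (‖f k‖ ^ 2 / |k|) ^ (1/2:ℝ) * ENNReal.ofReal |k| ^ (1/2:ℝ)
    rw [ENNReal.ofReal_rpow_of_nonneg (by positivity) (by norm_num),
        ENNReal.ofReal_rpow_of_nonneg (abs_nonneg k) (by norm_num),
        ← ENNReal.ofReal_mul (by positivity)]
    congr 1
    rw [← Real.sqrt_eq_rpow, ← Real.sqrt_eq_rpow, ← Real.sqrt_mul (by positivity),
        div_mul_cancel₀ _ habs.ne', Real.sqrt_sq (norm_nonneg _)]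
  rw [lintegral_congr_ae key]
  have hpq : Real.HolderConjugate 2 2 := Real.HolderConjugate.two_two
  have h := ENNReal.lintegral_mul_le_Lp_mul_Lq μ hpq
    (f := fun k => A k ^ (1/2:ℝ)) (g := fun k => (B k * g k ^ (2:ℝ)) ^ (1/2:ℝ))
    ((hAmeas.pow_const _).aemeasurable)
    (((hBmeas.mul (hg.pow_const _)).pow_const _).aemeasurable)
  have hsimp : ∀ x : ℝ≥0∞, (x ^ (1/2:ℝ)) ^ (2:ℝ) = x := by
    intro x; rw [← ENNReal.rpow_mul]; norm_num
  simp only [Pi.mul_apply, hsimp] at h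
  exact h

/-- The embedding of the space `K₀^{-1/2}` into tempered distributions:
if `f` is measurable with `C₀ = ∫ |f(k)|²/|k| dk < ∞`, then `f` is locally integrable and
for every Schwartz function `ψ`,
`|∫ f ψ| ≤ √C₀ · sup_k (1 + k²)|ψ(k)|`; in particular `f` defines a tempered
distribution on `ℝ`. -/
theorem sqInv_weight_integrable_defines_tempered_distribution
    (f : ℝ → ℂ) (hmeas : Measurable f)
    (hf : Integrable (fun k : ℝ => ‖f k‖ ^ 2 / |k|)) :
    LocallyIntegrable f volume ∧
    ∀ ψ : SchwartzMap ℝ ℂ,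
      ‖∫ k : ℝ, f k * ψ k‖ ≤
        Real.sqrt (∫ k : ℝ, ‖f k‖ ^ 2 / |k|) * ⨆ k : ℝ, (1 + k ^ 2) * ‖ψ k‖ := by
  set C₀ : ℝ := ∫ k : ℝ, ‖f k‖ ^ 2 / |k| with hC₀def
  have hC₀nn : 0 ≤ C₀ := integral_nonneg fun k => by positivity
  have hnn : 0 ≤ᵐ[volume] fun k : ℝ => ‖f k‖ ^ 2 / |k| :=
    Filter.Eventually.of_forall fun k => by positivity
  have hAint : ∫⁻ k, ENNReal.ofReal (‖f k‖ ^ 2 / |k|) = ENNReal.ofReal C₀ :=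
    (ofReal_integral_eq_lintegral_ofReal hf hnn).symm
  have h0vol : ∀ᵐ k : ℝ, k ≠ (0:ℝ) := by
    rw [ae_iff]
    refine measure_mono_null (fun x hx => ?_) (Real.volume_singleton (a := (0:ℝ)))
    simpa using hx
  constructor
  · rw [locallyIntegrable_iff]
    intro K hK
    refine ⟨hmeas.aestronglyMeasurable.restrict, ?_⟩
    rw [hasFiniteIntegral_iff_norm]
    have hcs := aux_cs f hmeas (volume.restrict K) (ae_restrict_of_ae h0vol)
      1 measurable_one
    simp only [Pi.one_apply, mul_one, ENNReal.one_rpow] at hcs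
    refine lt_of_le_of_lt hcs ?_
    have h1 : (∫⁻ k, ENNReal.ofReal (‖f k‖ ^ 2 / |k|) ∂volume.restrict K) ≠ ⊤ := by
      refine ne_top_of_le_ne_top ?_ (setLIntegral_le_lintegral _ _)
      rw [hAint]; exact ENNReal.ofReal_ne_top
    obtain ⟨R, hR⟩ := hK.isBounded.subset_closedBall 0
    have h2 : (∫⁻ k, ENNReal.ofReal |k| ∂volume.restrict K) ≠ ⊤ := by
      have hle : (∫⁻ k, ENNReal.ofReal |k| ∂volume.restrict K)
          ≤ ∫⁻ _, ENNReal.ofReal R ∂volume.restrict K := by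
        refine lintegral_mono_ae ?_
        filter_upwards [ae_restrict_mem hK.measurableSet] with k hk
        exact ENNReal.ofReal_le_ofReal (by simpa [Real.dist_eq] using hR hk)
      refine ne_top_of_le_ne_top ?_ hle
      rw [lintegral_const, Measure.restrict_apply_univ]
      exact (ENNReal.mul_lt_top ENNReal.ofReal_lt_top hK.measure_lt_top).ne
    exact ENNReal.mul_lt_top
      (ENNReal.rpow_lt_top_of_nonneg (by norm_num) h1)
      (ENNReal.rpow_lt_top_of_nonneg (by norm_num) h2)
  · intro ψ
    have hbdd : BddAbove (Set.range fun k : ℝ => (1 + k ^ 2) * ‖ψ k‖) := by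
      obtain ⟨C1, hC1⟩ := ψ.decay 0 0
      obtain ⟨C2, hC2⟩ := ψ.decay 2 0
      refine ⟨C1 + C2, ?_⟩
      rintro _ ⟨k, rfl⟩
      have h1 := hC1.2 k
      have h2 := hC2.2 k
      simp only [norm_iteratedFDeriv_zero, pow_zero, one_mul, Real.norm_eq_abs] at h1 h2
      show (1 + k ^ 2) * ‖ψ k‖ ≤ C1 + C2
      nlinarith [norm_nonneg (ψ k), sq_abs k]
    set M : ℝ := ⨆ k : ℝ, (1 + k ^ 2) * ‖ψ k‖ with hMdef
    have hle : ∀ k : ℝ, (1 + k ^ 2) * ‖ψ k‖ ≤ M := fun k => le_ciSup hbdd k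
    have hM0 : 0 ≤ M := le_trans (by positivity) (hle 0)
    refine le_trans (norm_integral_le_lintegral_norm _) ?_
    refine ENNReal.toReal_le_of_le_ofReal (by positivity) ?_
    set g : ℝ → ℝ≥0∞ := fun k => ENNReal.ofReal ‖ψ k‖ with hg
    have hgmeas : Measurable g :=
      ENNReal.measurable_ofReal.comp ψ.continuous.measurable.norm
    have heq : (∫⁻ k, ENNReal.ofReal ‖f k * ψ k‖)
        = ∫⁻ k, ENNReal.ofReal ‖f k‖ * g k := by
      refine lintegral_congr fun k => ?_
      rw [norm_mul, ENNReal.ofReal_mul (norm_nonneg _)]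
    rw [heq]
    refine le_trans (aux_cs f hmeas volume h0vol g hgmeas) ?_
    rw [ENNReal.ofReal_mul (Real.sqrt_nonneg _)]
    refine mul_le_mul' ?_ ?_
    · rw [hAint, ENNReal.ofReal_rpow_of_nonneg hC₀nn (by norm_num), ← Real.sqrt_eq_rpow]
    · have hpt : ∀ k : ℝ, ENNReal.ofReal |k| * g k ^ (2:ℝ)
          ≤ ENNReal.ofReal (M ^ 2) * ENNReal.ofReal (|k| / (1 + k ^ 2) ^ 2) := by
        intro k
        rw [hg]
        rw [ENNReal.ofReal_rpow_of_nonneg (norm_nonneg _) (by norm_num),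
            ← ENNReal.ofReal_mul (abs_nonneg k), ← ENNReal.ofReal_mul (by positivity)]
        refine ENNReal.ofReal_le_ofReal ?_
        have h1 : (0:ℝ) < 1 + k ^ 2 := by positivity
        have h2 : ‖ψ k‖ ≤ M / (1 + k ^ 2) := by
          rw [le_div_iff₀ h1]
          linarith [hle k, mul_comm (1 + k ^ 2) ‖ψ k‖]
        have h3 : ‖ψ k‖ ^ (2:ℝ) = ‖ψ k‖ ^ 2 := by
          rw [show (2:ℝ) = ((2:ℕ):ℝ) by norm_num, Real.rpow_natCast]
        rw [h3]
        calc |k| * ‖ψ k‖ ^ 2 ≤ |k| * (M / (1 + k ^ 2)) ^ 2 := by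
              gcongr
          _ = M ^ 2 * (|k| / (1 + k ^ 2) ^ 2) := by rw [div_pow]; ring
      have hw : ∫⁻ k, ENNReal.ofReal (|k| / (1 + k ^ 2) ^ 2) = 1 := by
        rw [← ofReal_integral_eq_lintegral_ofReal aux_weight_integrable
          (Filter.Eventually.of_forall fun k => by positivity), aux_weight_int,
          ENNReal.ofReal_one]
      calc (∫⁻ k, ENNReal.ofReal |k| * g k ^ (2:ℝ)) ^ (1/2:ℝ)
          ≤ (∫⁻ k, ENNReal.ofReal (M ^ 2) * ENNReal.ofReal (|k| / (1 + k ^ 2) ^ 2)) ^ (1/2:ℝ) := by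
            exact ENNReal.rpow_le_rpow (lintegral_mono hpt) (by norm_num)
        _ = (ENNReal.ofReal (M ^ 2)) ^ (1/2:ℝ) := by
            rw [lintegral_const_mul' _ _ ENNReal.ofReal_ne_top, hw, mul_one]
        _ = ENNReal.ofReal M := by
            rw [ENNReal.ofReal_rpow_of_nonneg (by positivity) (by norm_num),
              ← Real.sqrt_eq_rpow, Real.sqrt_sq hM0]
end
end
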